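/- arXiv:1710.03316 — 9 statements merged into one kernel-verified Lean document; each statement's English description precedes it below -/
import Mathlib

section
/- Let m = 2^d be a power of 2, n = m/2, and R = Z[ζ_m]. For x = Σ_{i=0}^{n-1} x_i ζ_m^i ∈ R with x_i ∈ Z, the adjusted canonical embedding ι : R → R^n satisfies ‖ι(x)‖ = √n · ‖(x_0,...,x_{n-1})‖, where the second norm is the Euclidean norm of the coefficient vector. -/
open scoped BigOperators

open Polynomial in
theorem aux_sum_zero (d : ℕ) (hd : 1 ≤ d) (m : ℕ) (hm : m = 2 ^ d)
    (K : Type) [Field K] [NumberField K] (ζ : K) (hζ : IsPrimitiveRoot ζ m)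
    (hK : Algebra.adjoin ℚ ({ζ} : Set K) = ⊤) (t : ℕ)
    (hy1 : ζ ^ t ≠ 1) (hy2 : ζ ^ t ≠ -1) :
    ∑ σ : K →+* ℂ, σ (ζ ^ t) = 0 := by
  have hmpos : 0 < m := by
    subst hm; positivity
  set M : ℕ+ := ⟨m, hmpos⟩ with hM
  have hζ' : IsPrimitiveRoot ζ ((M : ℕ+) : ℕ) := hζ
  haveI : IsCyclotomicExtension {(M : ℕ)} ℚ K := by
    rw [IsCyclotomicExtension.iff_adjoin_eq_top]
    refine ⟨fun n hn _ => ⟨ζ, by rw [Set.mem_singleton_iff] at hn; subst hn; exact hζ'⟩, ?_⟩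
    rw [← top_le_iff, ← hK]
    exact Algebra.adjoin_mono (fun b hb => by
      rw [Set.mem_singleton_iff] at hb; subst hb
      exact ⟨M, Set.mem_singleton _, hmpos.ne', hζ.pow_eq_one⟩)
  have hirr : Irreducible (cyclotomic ((M : ℕ+) : ℕ) ℚ) :=
    Polynomial.cyclotomic.irreducible_rat hmpos
  -- order of y
  set y : K := ζ ^ t with hy
  have hym : y ^ (2 ^ d) = 1 := by
    rw [hy, ← pow_mul, mul_comm, pow_mul, ← hm, hζ.pow_eq_one, one_pow]
  obtain ⟨e, hed, he⟩ := (Nat.dvd_prime_pow Nat.prime_two).1 (orderOf_dvd_of_pow_eq_one hym)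
  have he0 : e ≠ 0 := by
    rintro rfl
    exact hy1 (orderOf_eq_one_iff.1 (by simpa using he))
  have he1 : e ≠ 1 := by
    rintro rfl
    have h2 : y * y = 1 := by
      have := pow_orderOf_eq_one y
      rwa [he, pow_one, pow_two] at this
    rcases mul_self_eq_one_iff.1 h2 with h | h
    · exact hy1 h
    · exact hy2 h
  have he2 : 2 ≤ e := by omega
  set w : K := y ^ 2 ^ (e - 1) with hwdef
  have hw : w = -1 := by
    have hsum : 2 ^ (e - 1) + 2 ^ (e - 1) = 2 ^ e := by
      rw [← two_mul, ← pow_succ']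
      congr 1; omega
    have hw2 : w * w = 1 := by
      rw [hwdef, ← pow_add, hsum, ← he, pow_orderOf_eq_one]
    have hwne : w ≠ 1 := by
      intro h
      have := orderOf_dvd_of_pow_eq_one h
      rw [he] at this
      have := (Nat.pow_dvd_pow_iff_le_right one_lt_two).1 this
      omega
    rcases mul_self_eq_one_iff.1 hw2 with h | h
    · exact absurd h hwne
    · exact h
  set u : ℕ := 2 ^ (e - 1) + 1 with hudef
  have hodd : Odd u := by
    refine Even.add_one (Nat.even_pow.2 ⟨even_two, ?_⟩)
    omega
  have hu : Nat.Coprime u m := by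
    rw [hm]
    refine Nat.Coprime.pow_right d ?_
    rw [Nat.coprime_comm]
    rw [Nat.Prime.coprime_iff_not_dvd Nat.prime_two]
    rw [Nat.odd_iff] at hodd
    omega
  have hζu : IsPrimitiveRoot (ζ ^ u) m := hζ.pow_of_coprime u hu
  have hmem : ζ ^ u ∈ primitiveRoots ((M : ℕ+) : ℕ) K := (mem_primitiveRoots hmpos).2 hζu
  set φ : K →ₐ[ℚ] K := (hζ'.embeddingsEquivPrimitiveRoots K hirr).symm ⟨ζ ^ u, hmem⟩ with hφdef
  have hφζ : φ ζ = ζ ^ u := by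
    have h2 : hζ'.embeddingsEquivPrimitiveRoots K hirr φ = ⟨ζ ^ u, hmem⟩ :=
      Equiv.apply_symm_apply _ _
    rw [← hζ'.embeddingsEquivPrimitiveRoots_apply_coe K hirr φ, h2]
  have hφy : φ y = -y := by
    rw [hy, map_pow, hφζ, ← pow_mul, mul_comm, pow_mul, ← hy, hudef, pow_succ, ← hwdef, hw,
      neg_one_mul]
  have hφb : Function.Bijective φ := Algebra.IsAlgebraic.algHom_bijective φ
  have hcomp : Function.Bijective (fun σ : K →+* ℂ => σ.comp φ.toRingHom) := by
    refine Finite.injective_iff_bijective.1 (fun σ₁ σ₂ h => RingHom.ext fun k => ?_)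
    obtain ⟨k', rfl⟩ := hφb.2 k
    exact DFunLike.congr_fun h k'
  have hs : ∑ σ : K →+* ℂ, σ (-y) = ∑ σ : K →+* ℂ, σ y :=
    Fintype.sum_bijective _ hcomp _ _ (fun σ => by simp [← hφy])
  have hs2 : (2 : ℂ) * ∑ σ : K →+* ℂ, σ y = 0 := by
    simp only [map_neg, Finset.sum_neg_distrib] at hs
    linear_combination -hs
  exact (mul_eq_zero.1 hs2).resolve_left two_ne_zero

open Polynomial in
theorem aux_card (d : ℕ) (hd : 1 ≤ d) (m n : ℕ) (hm : m = 2 ^ d) (hn : n = m / 2)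
    (K : Type) [Field K] [NumberField K] (ζ : K) (hζ : IsPrimitiveRoot ζ m)
    (hK : Algebra.adjoin ℚ ({ζ} : Set K) = ⊤) :
    Fintype.card (K →+* ℂ) = n := by
  have hmpos : 0 < m := by subst hm; positivity
  set M : ℕ+ := ⟨m, hmpos⟩ with hM
  have hζ' : IsPrimitiveRoot ζ ((M : ℕ+) : ℕ) := hζ
  haveI : IsCyclotomicExtension {(M : ℕ)} ℚ K := by
    rw [IsCyclotomicExtension.iff_adjoin_eq_top]
    refine ⟨fun n hn _ => ⟨ζ, by rw [Set.mem_singleton_iff] at hn; subst hn; exact hζ'⟩, ?_⟩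
    rw [← top_le_iff, ← hK]
    exact Algebra.adjoin_mono (fun b hb => by
      rw [Set.mem_singleton_iff] at hb; subst hb
      exact ⟨M, Set.mem_singleton _, hmpos.ne', hζ.pow_eq_one⟩)
  have hirr : Irreducible (cyclotomic ((M : ℕ+) : ℕ) ℚ) :=
    Polynomial.cyclotomic.irreducible_rat hmpos
  rw [NumberField.Embeddings.card K ℂ]
  have hfr := IsCyclotomicExtension.finrank (n := (M : ℕ)) K hirr
  rw [hfr]
  show (m : ℕ).totient = n
  rw [hm, Nat.totient_prime_pow Nat.prime_two (by omega)]
  have h2 : 2 ^ d = 2 * 2 ^ (d - 1) := by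
    rw [← pow_succ']; congr 1; omega
  omega

/-- For `m = 2^d`, `n = m/2`, `K = ℚ(ζ_m)` and `x = ∑ x_i ζ^i` with integer coefficients,
the adjusted canonical embedding satisfies `‖ι(x)‖ = √n · ‖(x_0,…,x_{n-1})‖`, where
`‖ι(x)‖² = ∑_{σ : K →+* ℂ} |σ(x)|²`. -/
theorem stmt_0 (d : ℕ) (hd : 1 ≤ d) (m n : ℕ) (hm : m = 2 ^ d) (hn : n = m / 2)
    (K : Type) [Field K] [NumberField K] (ζ : K) (hζ : IsPrimitiveRoot ζ m)
    (hK : Algebra.adjoin ℚ ({ζ} : Set K) = ⊤) (x : Fin n → ℤ) :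
    Real.sqrt (∑ σ : K →+* ℂ, ‖σ (∑ i : Fin n, (x i : K) * ζ ^ (i : ℕ))‖ ^ 2) =
      Real.sqrt n * Real.sqrt (∑ i : Fin n, (x i : ℝ) ^ 2) := by
  have hmpos : 0 < m := by subst hm; positivity
  have hdvd : 2 ∣ m := hm ▸ dvd_pow_self 2 (by omega)
  have hm2n : m = 2 * n := by rw [hn, Nat.mul_div_cancel' hdvd]
  have hm2 : 2 ≤ m := hm ▸ (by calc (2:ℕ) = 2^1 := rfl
                                   _ ≤ 2^d := Nat.pow_le_pow_right (by norm_num) hd)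
  have hnpos : 0 < n := by omega
  have hζ0 : ζ ≠ 0 := by
    intro h
    have := hζ.pow_eq_one
    rw [h, zero_pow (by omega)] at this
    exact zero_ne_one this
  have hζn : ζ ^ n = -1 := by
    have h2 : ζ ^ n * ζ ^ n = 1 := by
      rw [← pow_add]
      have : n + n = m := by omega
      rw [this, hζ.pow_eq_one]
    rcases mul_self_eq_one_iff.1 h2 with h | h
    · exact absurd h (hζ.pow_ne_one_of_pos_of_lt hnpos.ne' (by omega))
    · exact h
  have hinvpow : ζ⁻¹ = ζ ^ (m - 1) := by
    refine (inv_eq_of_mul_eq_one_right ?_)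
    rw [← pow_succ']
    have : m - 1 + 1 = m := by omega
    rw [this, hζ.pow_eq_one]
  -- the key T computation
  have hT : ∀ i j : Fin n, (∑ σ : K →+* ℂ, σ (ζ ^ (i : ℕ) * (ζ⁻¹) ^ (j : ℕ)))
      = if i = j then (n : ℂ) else 0 := by
    intro i j
    by_cases hij : i = j
    · subst hij
      rw [if_pos rfl]
      have h1 : ζ ^ (i : ℕ) * (ζ⁻¹) ^ (i : ℕ) = 1 := by
        rw [inv_pow, mul_inv_cancel₀ (pow_ne_zero _ hζ0)]
      rw [h1]
      simp [Finset.card_univ, aux_card d hd m n hm hn K ζ hζ hK]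
    · rw [if_neg hij]
      set t : ℕ := (i : ℕ) + (m - 1) * (j : ℕ) with ht
      have hstep : ζ ^ (i : ℕ) * (ζ⁻¹) ^ (j : ℕ) = ζ ^ t := by
        rw [hinvpow, ← pow_mul, ← pow_add]
      have hmj : (m - 1) * (j : ℕ) + (j : ℕ) = m * (j : ℕ) := by
        rw [Nat.sub_one_mul, Nat.sub_add_cancel (Nat.le_mul_of_pos_left _ hmpos)]
      have hij' : (i : ℕ) ≠ (j : ℕ) := fun h => hij (Fin.ext h)
      have hi : (i : ℕ) < n := i.isLt
      have hj : (j : ℕ) < n := j.isLt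
      rw [hstep]
      refine aux_sum_zero d hd m hm K ζ hζ hK t ?_ ?_
      · intro h1
        obtain ⟨c, hc⟩ := (hζ.pow_eq_one_iff_dvd _).1 h1
        -- t = m * c ; so i + m*j = m*c + j
        have hlin : (i : ℕ) + m * (j : ℕ) = m * c + (j : ℕ) := by omega
        have hmod : ((i : ℕ) + m * (j : ℕ)) % m = (m * c + (j : ℕ)) % m := by rw [hlin]
        rw [Nat.add_mul_mod_self_left, Nat.mul_add_mod] at hmod
        rw [Nat.mod_eq_of_lt (by omega), Nat.mod_eq_of_lt (by omega)] at hmod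
        exact hij' hmod
      · intro h1
        have h2 : ζ ^ (t + n) = 1 := by
          rw [pow_add, h1, hζn, neg_mul_neg, one_mul]
        obtain ⟨c, hc⟩ := (hζ.pow_eq_one_iff_dvd _).1 h2
        have hlin : ((i : ℕ) + n) + m * (j : ℕ) = m * c + (j : ℕ) := by omega
        have hmod : (((i : ℕ) + n) + m * (j : ℕ)) % m = (m * c + (j : ℕ)) % m := by rw [hlin]
        rw [Nat.add_mul_mod_self_left, Nat.mul_add_mod] at hmod
        rw [Nat.mod_eq_of_lt (by omega), Nat.mod_eq_of_lt (by omega)] at hmod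
        omega
  -- conjugation fact
  have hconj : ∀ σ : K →+* ℂ, (starRingEnd ℂ) (σ ζ) = σ ζ⁻¹ := by
    intro σ
    have h1 : (σ ζ) ^ m = 1 := by rw [← map_pow, hζ.pow_eq_one, map_one]
    have habs : ‖σ ζ‖ = 1 := by
      exact Complex.norm_eq_one_of_pow_eq_one h1 (by omega)
    rw [map_inv₀]
    exact (Complex.inv_eq_conj habs).symm
  -- main computation
  set X : K := ∑ i : Fin n, (x i : K) * ζ ^ (i : ℕ) with hX
  set X' : K := ∑ j : Fin n, (x j : K) * (ζ⁻¹) ^ (j : ℕ) with hX'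
  have hconjX : ∀ σ : K →+* ℂ, (starRingEnd ℂ) (σ X) = σ X' := by
    intro σ
    rw [hX, hX', map_sum, map_sum, map_sum]
    congr 1
    ext j
    rw [map_mul, map_mul, map_mul, map_pow, map_pow, map_pow, map_intCast, map_intCast,
      hconj]
  have key : (∑ σ : K →+* ℂ, ‖σ X‖ ^ 2) = (n : ℝ) * ∑ i : Fin n, (x i : ℝ) ^ 2 := by
    have hC : ((∑ σ : K →+* ℂ, ‖σ X‖ ^ 2 : ℝ) : ℂ)
        = (((n : ℝ) * ∑ i : Fin n, (x i : ℝ) ^ 2 : ℝ) : ℂ) := by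
      push_cast
      calc ∑ σ : K →+* ℂ, (‖σ X‖ : ℂ) ^ 2
          = ∑ σ : K →+* ℂ, σ X * (starRingEnd ℂ) (σ X) := by
            refine Finset.sum_congr rfl (fun σ _ => ?_)
            rw [Complex.mul_conj, ← Complex.sq_norm]
            push_cast
            ring
        _ = ∑ σ : K →+* ℂ, σ (X * X') := by
            refine Finset.sum_congr rfl (fun σ _ => ?_)
            rw [hconjX, map_mul]
        _ = ∑ i : Fin n, ∑ j : Fin n, ((x i : ℂ) * (x j : ℂ))
              * ∑ σ : K →+* ℂ, σ (ζ ^ (i : ℕ) * (ζ⁻¹) ^ (j : ℕ)) := by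
            calc ∑ σ : K →+* ℂ, σ (X * X')
                = ∑ σ : K →+* ℂ, ∑ i : Fin n, ∑ j : Fin n,
                    ((x i : ℂ) * (x j : ℂ)) * σ (ζ ^ (i : ℕ) * (ζ⁻¹) ^ (j : ℕ)) := by
                  refine Finset.sum_congr rfl fun σ _ => ?_
                  rw [map_mul, hX, hX', map_sum, map_sum, Finset.sum_mul_sum]
                  refine Finset.sum_congr rfl fun i _ => Finset.sum_congr rfl fun j _ => ?_
                  rw [map_mul, map_mul, map_mul, map_intCast, map_intCast]
                  ring
              _ = ∑ i : Fin n, ∑ j : Fin n, ((x i : ℂ) * (x j : ℂ))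
                    * ∑ σ : K →+* ℂ, σ (ζ ^ (i : ℕ) * (ζ⁻¹) ^ (j : ℕ)) := by
                  rw [Finset.sum_comm]
                  refine Finset.sum_congr rfl fun i _ => ?_
                  rw [Finset.sum_comm]
                  refine Finset.sum_congr rfl fun j _ => ?_
                  rw [Finset.mul_sum]
        _ = ∑ i : Fin n, ((x i : ℂ) * (x i : ℂ)) * (n : ℂ) := by
            refine Finset.sum_congr rfl (fun i _ => ?_)
            rw [Finset.sum_eq_single i]
            · rw [hT, if_pos rfl]
            · intro j _ hji
              rw [hT, if_neg (Ne.symm hji), mul_zero]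
            · intro h; exact absurd (Finset.mem_univ i) h
        _ = (n : ℂ) * ∑ i : Fin n, (x i : ℂ) ^ 2 := by
            rw [Finset.mul_sum]
            refine Finset.sum_congr rfl (fun i _ => ?_)
            ring
    exact_mod_cast hC
  rw [key, Real.sqrt_mul (by positivity)]
end

section
/- Let q be an odd prime and δ ∈ F_{q^2} \ F_q. The F_q-linear map f_δ : F_{q^2} → V^2 defined by f_δ(a) = (a^q − a, (aδ)^q − aδ), where V = {x ∈ F_{q^2} : x^q = −x}, is injective, and hence an isomorphism of F_q-vector spaces onto V × V. -/
/-- For `q` an odd prime, `F = 𝔽_{q²}` and `δ ∈ F \ 𝔽_q`, the `𝔽_q`-linear map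
`a ↦ (a^q − a, (aδ)^q − aδ)` is injective, with range `V × V` where
`V = {x : x^q = −x}`. -/
theorem stmt_1 (q : ℕ) (hq : q.Prime) (hodd : Odd q) (F : Type) [Field F] [Fintype F]
    (hF : Fintype.card F = q ^ 2) (δ : F) (hδ : δ ^ q ≠ δ) :
    Function.Injective (fun a : F => (a ^ q - a, (a * δ) ^ q - a * δ)) ∧
      Set.range (fun a : F => (a ^ q - a, (a * δ) ^ q - a * δ)) =
        {p : F × F | p.1 ^ q = -p.1 ∧ p.2 ^ q = -p.2} := by
  haveI : Fact q.Prime := ⟨hq⟩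
  -- the characteristic of F is q
  obtain ⟨p, hp⟩ := CharP.exists F
  haveI := hp
  have hpprime : p.Prime := CharP.char_is_prime F p
  haveI : Fact p.Prime := ⟨hpprime⟩
  obtain ⟨n, hn⟩ := FiniteField.card F p
  have hpq : p = q := by
    have hdvd : p ∣ q ^ 2 := by
      rw [← hF, hn.2]
      exact dvd_pow_self p n.pos.ne'
    exact (Nat.prime_dvd_prime_iff_eq hpprime hq).mp (hpprime.dvd_of_dvd_pow hdvd)
  rw [hpq] at hp
  haveI : CharP F q := hp
  -- Frobenius facts
  have hfrob : ∀ x y : F, (x - y) ^ q = x ^ q - y ^ q := fun x y => by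
    have := map_sub (frobenius F q) x y
    simpa [frobenius_def] using this
  have hmul : ∀ x y : F, (x * y) ^ q = x ^ q * y ^ q := fun x y => mul_pow x y q
  have hsq : ∀ x : F, (x ^ q) ^ q = x := by
    intro x
    rw [← pow_mul, ← sq, ← hF, FiniteField.pow_card]
  have hd : δ ^ q - δ ≠ 0 := sub_ne_zero.mpr hδ
  constructor
  · intro a b hab
    have h1 : a ^ q - a = b ^ q - b := congrArg Prod.fst hab
    have h2 : (a * δ) ^ q - a * δ = (b * δ) ^ q - b * δ := congrArg Prod.snd hab
    rw [hmul, hmul] at h2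
    have h1' : a ^ q - b ^ q = a - b := by linear_combination h1
    have h2' : (a - b) * (δ ^ q - δ) = 0 := by linear_combination h2 - δ ^ q * h1'
    rcases mul_eq_zero.mp h2' with h | h
    · exact sub_eq_zero.mp h
    · exact absurd h hd
  · ext ⟨u, v⟩
    simp only [Set.mem_range, Set.mem_setOf_eq]
    constructor
    · rintro ⟨a, ha⟩
      have h1 : a ^ q - a = u := congrArg Prod.fst ha
      have h2 : (a * δ) ^ q - a * δ = v := congrArg Prod.snd ha
      constructor
      · rw [← h1, hfrob, hsq]; ring
      · rw [← h2, hfrob, hsq]; ring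
    · rintro ⟨hu, hv⟩
      refine ⟨(v - u * δ ^ q) * (δ ^ q - δ)⁻¹, ?_⟩
      have haq : ((v - u * δ ^ q) * (δ ^ q - δ)⁻¹) ^ q
          = (v - u * δ) * (δ ^ q - δ)⁻¹ := by
        rw [hmul, hfrob, hmul, hsq, inv_pow, hfrob, hsq, hu, hv]
        rw [show δ - δ ^ q = -(δ ^ q - δ) by ring, inv_neg]
        ring
      apply Prod.ext <;> simp only
      · rw [haq]
        field_simp
        ring
      · rw [hmul, haq]
        field_simp
        ring
end

section
/- Let q be an odd prime, A_q = F_{q^2} \ F_q, and fix δ ∈ A_q. If a is uniformly distributed on A_q, then for any c, d ∈ V = {x : x^q = −x} with c ≠ 0, the probability that (a^q − a, (aδ)^q − aδ) = (c, d) equals 1/(q(q−1)). -/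
open scoped BigOperators

/-- For `q` an odd prime, `F = 𝔽_{q²}`, `δ ∈ A_q = F \ 𝔽_q`, and `c, d ∈ V = {x : x^q = −x}`
with `c ≠ 0`: if `a` is uniform on `A_q` then
`P((a^q − a, (aδ)^q − aδ) = (c,d)) = 1/(q(q−1))`. -/
theorem stmt_2 (q : ℕ) (hq : q.Prime) (hodd : Odd q) (F : Type) [Field F] [Fintype F]
    [DecidableEq F] (hF : Fintype.card F = q ^ 2) (δ : F) (hδ : δ ^ q ≠ δ)
    (c d : F) (hc : c ^ q = -c) (hc0 : c ≠ 0) (hd : d ^ q = -d) :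
    ((Finset.univ.filter
        (fun a : F => a ^ q ≠ a ∧ a ^ q - a = c ∧ (a * δ) ^ q - a * δ = d)).card : ℝ) /
      ((Finset.univ.filter (fun a : F => a ^ q ≠ a)).card : ℝ) = 1 / ((q : ℝ) * ((q : ℝ) - 1)) := by
  have hq2 : 2 ≤ q := hq.two_le
  have hq3 : 3 ≤ q := by rcases hodd with ⟨k, hk⟩; omega
  haveI : Fact q.Prime := ⟨hq⟩
  -- characteristic
  obtain ⟨p, hp⟩ := CharP.exists F
  have hpprime : p.Prime := CharP.char_is_prime F p
  haveI : Fact p.Prime := ⟨hpprime⟩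
  obtain ⟨n, hcard⟩ := FiniteField.card F p
  have hpq : p = q := by
    have : p ∣ q ^ 2 := by
      rw [← hF, hcard.2]; exact dvd_pow_self p n.2.ne'
    exact ((Nat.prime_dvd_prime_iff_eq hpprime hq).mp (hpprime.dvd_of_dvd_pow this))
  subst hpq
  -- Frobenius facts
  have hpow2 : ∀ x : F, (x ^ p) ^ p = x := by
    intro x
    rw [← pow_mul, ← sq, ← hF, FiniteField.pow_card]
  have he : δ ^ p - δ ≠ 0 := sub_ne_zero.mpr hδ
  set e : F := δ ^ p - δ with hedef
  set a₀ : F := (d - c * δ ^ p) / e with ha₀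
  -- a₀ ^ p computation
  have hfrob : ∀ x y : F, (x - y) ^ p = x ^ p - y ^ p := fun x y => sub_pow_char x y
  have ha₀p : a₀ ^ p = (d - c * δ) / e := by
    rw [ha₀, div_pow, hfrob, mul_pow, hd, hc, hpow2, hedef, hfrob, hpow2]
    rw [show δ - δ ^ p = -(δ ^ p - δ) by ring, div_neg, ← neg_div, neg_sub]
    ring_nf
  -- numerator is {a₀}
  have hnum : (Finset.univ.filter
      (fun a : F => a ^ p ≠ a ∧ a ^ p - a = c ∧ (a * δ) ^ p - a * δ = d)) = {a₀} := by
    apply Finset.eq_singleton_iff_unique_mem.mpr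
    constructor
    · simp only [Finset.mem_filter, Finset.mem_univ, true_and]
      have h1 : a₀ ^ p - a₀ = c := by
        rw [ha₀p, ha₀, div_sub_div_same]
        rw [show d - c * δ - (d - c * δ ^ p) = c * e by rw [hedef]; ring]
        exact mul_div_cancel_right₀ c he
      refine ⟨?_, h1, ?_⟩
      · intro habs; rw [sub_eq_zero.mpr habs] at h1; exact hc0 h1.symm
      · rw [mul_pow, ha₀p, ha₀, div_mul_eq_mul_div, div_mul_eq_mul_div,
          div_sub_div_same, div_eq_iff he, hedef]
        ring
    · intro a ha'
      simp only [Finset.mem_filter, Finset.mem_univ, true_and] at ha'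
      obtain ⟨-, h2, h3⟩ := ha'
      rw [mul_pow] at h3
      have ha : a ^ p = a + c := by linear_combination h2
      rw [ha] at h3
      rw [ha₀, eq_div_iff he, hedef]
      linear_combination h3
  -- denominator count: #{x : x^p = x} = p
  obtain ⟨g, hg⟩ := IsCyclic.exists_ofOrder_eq_natCard (α := Fˣ)
  have hcardu : Nat.card Fˣ = p ^ 2 - 1 := by
    rw [Nat.card_eq_fintype_card, Fintype.card_units, hF]
  obtain ⟨k, rfl⟩ : ∃ k, p = k + 1 := ⟨p - 1, by omega⟩
  set q' := k + 1
  have hordg : orderOf g = q' ^ 2 - 1 := by rw [hg, hcardu]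
  have horder : orderOf ((g ^ (q' + 1) : Fˣ) : F) = k := by
    rw [orderOf_units, orderOf_pow, hordg]
    have h1 : q' ^ 2 - 1 = k * (q' + 1) := by simp [q']; ring_nf; omega
    rw [h1, Nat.gcd_mul_left_left]
    have h2 : 0 < q' + 1 := Nat.succ_pos _
    rw [Nat.mul_div_cancel _ h2]
  have hprim : IsPrimitiveRoot ((g ^ (q' + 1) : Fˣ) : F) k := horder ▸ IsPrimitiveRoot.orderOf _
  have hroots : (Polynomial.nthRootsFinset k (1 : F)).card = k := hprim.card_nthRootsFinset
  have hk1 : 0 < k := by omega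
  have hfix : (Finset.univ.filter (fun x : F => x ^ q' = x)) =
      insert (0 : F) (Polynomial.nthRootsFinset k (1 : F)) := by
    ext x
    simp only [Finset.mem_filter, Finset.mem_univ, true_and, Finset.mem_insert,
      Polynomial.mem_nthRootsFinset hk1]
    constructor
    · intro hx
      rcases eq_or_ne x 0 with h0 | h0
      · exact Or.inl h0
      · right
        have : x * x ^ k = x * 1 := by
          rw [mul_one, ← pow_succ']; exact hx
        exact mul_left_cancel₀ h0 this
    · rintro (rfl | hx)
      · simp [q']
      · rw [show q' = k + 1 from rfl, pow_succ', hx, mul_one]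
  have hfixcard : (Finset.univ.filter (fun x : F => x ^ q' = x)).card = q' := by
    rw [hfix, Finset.card_insert_of_notMem, hroots]
    intro habs
    have := (Polynomial.mem_nthRootsFinset hk1 _).mp habs
    simp [zero_pow hk1.ne'] at this
  have hdenomcard : (Finset.univ.filter (fun x : F => x ^ q' ≠ x)).card = q' ^ 2 - q' := by
    have hsplit : (Finset.univ.filter (fun x : F => x ^ q' ≠ x)) =
        Finset.univ \ (Finset.univ.filter (fun x : F => x ^ q' = x)) := by
      ext x; simp
    rw [hsplit, Finset.card_sdiff_of_subset (Finset.filter_subset _ _), Finset.card_univ, hF, hfixcard]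
  rw [hnum, hdenomcard, Finset.card_singleton]
  have hcast : ((q' ^ 2 - q' : ℕ) : ℝ) = (q' : ℝ) ^ 2 - q' := by
    have : q' ≤ q' ^ 2 := by nlinarith [hk1]
    push_cast [this]; ring
  rw [hcast]
  have hne : (q' : ℝ) ^ 2 - q' ≠ 0 := by
    have : (3 : ℝ) ≤ q' := by exact_mod_cast hq3
    nlinarith
  rw [div_eq_div_iff hne (by intro h; apply hne; nlinarith [h])]
  ring
end

section
/- Let q be an odd prime, A_q = F_{q^2} \ F_q, δ ∈ A_q, and s_0 ∈ F_q. Let a be uniform on A_q and e any F_{q^2}-valued random variable independent of a. Then the random variable m_δ = ((aδ)^q − aδ)/(a^q − a) + s_0 + (e^q − e)/(a^q − a) is uniformly distributed on F_q. -/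
open Finset Polynomial

lemma aux_root_bound (q : ℕ) (hq : 2 ≤ q) (F : Type) [Field F] [Fintype F] [DecidableEq F] (v : F) :
    (univ.filter fun a : F => a ^ q = v * a).card ≤ q := by
  classical
  set p : F[X] := X ^ q - C v * X with hp
  have hp0 : p ≠ 0 := by
    intro h
    have : p.coeff q = 1 := by
      simp only [hp, coeff_sub, coeff_X_pow, coeff_C_mul, coeff_X]
      rw [if_pos trivial, if_neg (by omega : ¬ 1 = q)]
      ring
    rw [h] at this; simp at this
  have hdeg : p.natDegree ≤ q := by
    apply le_trans (natDegree_sub_le _ _)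
    simp only [natDegree_X_pow, max_le_iff]
    refine ⟨le_rfl, le_trans (natDegree_C_mul_le _ _) ?_⟩
    simp [natDegree_X]; omega
  calc (univ.filter fun a : F => a ^ q = v * a).card
      ≤ p.roots.toFinset.card := by
        apply Finset.card_le_card
        intro a ha
        simp only [mem_filter] at ha
        simp only [Multiset.mem_toFinset, mem_roots', IsRoot.def]
        exact ⟨hp0, by simp [hp, ha.2, sub_eq_zero]⟩
    _ ≤ Multiset.card p.roots := Multiset.toFinset_card_le _
    _ ≤ p.natDegree := card_roots' p
    _ ≤ q := hdeg

lemma aux_fiber (F : Type) [Fintype F] [DecidableEq F] [AddCommGroup F]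
    (ψ : F → F) (hadd : ∀ x y, ψ (x + y) = ψ x + ψ y) (a₁ w : F) (h : ψ a₁ = w) :
    (univ.filter fun a => ψ a = w).card = (univ.filter fun a => ψ a = 0).card := by
  have hsub : ∀ x y, ψ (x - y) = ψ x - ψ y := by
    intro x y
    have := hadd (x - y) y
    rw [sub_add_cancel] at this
    exact eq_sub_of_add_eq this.symm
  apply Finset.card_nbij' (fun a => a - a₁) (fun a => a + a₁) <;>
    simp only [Set.MapsTo, Set.LeftInvOn, Set.RightInvOn, mem_coe, mem_filter, mem_univ, true_and] <;> intro a ha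
  · rw [hsub, ha, h, sub_self]
  · rw [hadd, ha, h, zero_add]
  · exact sub_add_cancel a a₁
  · exact add_sub_cancel_right a a₁

lemma aux_charP (q : ℕ) (hq : q.Prime) (F : Type) [Field F] [Fintype F]
    (hF : Fintype.card F = q ^ 2) : CharP F q := by
  obtain ⟨p, hp⟩ := CharP.exists F
  haveI := hp
  obtain ⟨n, hpprime, hcard⟩ := FiniteField.card F p
  have hpq : p = q := by
    have hdvd : p ∣ q ^ 2 := by
      rw [← hF, hcard]
      exact dvd_pow_self p n.2.ne'
    exact (Nat.prime_dvd_prime_iff_eq hpprime hq).mp (hpprime.dvd_of_dvd_pow hdvd)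
  rwa [hpq] at hp

lemma aux_count (q : ℕ) (hq : q.Prime) (hq2 : 2 ≤ q) (F : Type) [Field F] [Fintype F]
    [DecidableEq F] (hF : Fintype.card F = q ^ 2) (δ : F) (hδ : δ ^ q ≠ δ)
    (c : F) (hc : c ^ q = c) (e : F) :
    ((univ.filter fun a : F => a ^ q ≠ a ∧
        a ^ q * (δ ^ q - c) - a * (δ - c) = e - e ^ q).card = q - 1)
    ∧ (univ.filter fun a : F => a ^ q = a).card = q := by
  haveI : CharP F q := aux_charP q hq F hF
  haveI : Fact q.Prime := ⟨hq⟩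
  have hqq : ∀ x : F, (x ^ q) ^ q = x := by
    intro x
    rw [← pow_mul, ← sq, ← hF, FiniteField.pow_card]
  set S := univ.filter fun a : F => a ^ q = a with hSdef
  have hS_le : S.card ≤ q := by
    have := aux_root_bound q hq2 F 1
    simpa [hSdef] using this
  have hS : S.card = q := by
    set ψ : F → F := fun a => a ^ q - a with hψ
    have hψadd : ∀ x y, ψ (x + y) = ψ x + ψ y := by
      intro x y; simp only [hψ, add_pow_char]; ring
    have himgT : univ.image ψ ⊆ univ.filter fun x : F => x ^ q = -1 * x := by
      intro x hx
      simp only [mem_image] at hx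
      obtain ⟨a, _, rfl⟩ := hx
      simp only [mem_filter, mem_univ, true_and, hψ]
      rw [sub_pow_char, hqq]; ring
    have himg_le : (univ.image ψ).card ≤ q :=
      le_trans (Finset.card_le_card himgT) (aux_root_bound q hq2 F (-1))
    have hfib : ∀ b ∈ univ.image ψ, (univ.filter fun a => ψ a = b).card = S.card := by
      intro b hb
      simp only [mem_image] at hb
      obtain ⟨a₁, -, ha₁⟩ := hb
      rw [aux_fiber F ψ hψadd a₁ b ha₁, hSdef]
      congr 1
      apply Finset.filter_congr
      intro x _
      simp only [hψ, sub_eq_zero]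
    have hsum : q ^ 2 = (univ.image ψ).card * S.card := by
      rw [← hF, ← Finset.card_univ, Finset.card_eq_sum_card_image ψ univ,
        Finset.sum_congr rfl hfib, Finset.sum_const, smul_eq_mul]
    -- conclude S.card = q
    have h1 : q * q ≤ q * S.card := by
      calc q * q = q ^ 2 := (sq q).symm
        _ = (univ.image ψ).card * S.card := hsum
        _ ≤ q * S.card := Nat.mul_le_mul_right _ himg_le
    have := Nat.le_of_mul_le_mul_left h1 (by omega)
    omega
  refine ⟨?_, hS⟩
  -- the main fiber count
  have hd : δ - c ≠ 0 := by
    intro h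
    rw [sub_eq_zero] at h
    exact hδ (by rw [h, hc])
  have hdq : (δ - c) ^ q = δ ^ q - c := by rw [sub_pow_char, hc]
  have hdq0 : δ ^ q - c ≠ 0 := by
    rw [← hdq]; exact pow_ne_zero _ hd
  set L : F → F := fun a => a ^ q * (δ ^ q - c) - a * (δ - c) with hL
  have hLadd : ∀ x y, L (x + y) = L x + L y := by
    intro x y; simp only [hL, add_pow_char]; ring
  -- ker L has the same cardinality as S
  have hK : (univ.filter fun a => L a = 0).card = S.card := by
    rw [hSdef]
    apply (Finset.card_nbij' (fun a : F => a * (δ - c)⁻¹) (fun a => a * (δ - c)) ?_ ?_ ?_ ?_).symm <;>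
      simp only [Set.MapsTo, Set.LeftInvOn, Set.RightInvOn, mem_coe, mem_filter, mem_univ, true_and] <;> intro a ha
    · -- a ^ q = a → L (a * (δ - c)⁻¹) = 0
      simp only [hL, mul_pow, inv_pow, hdq, ha, sub_eq_zero]
      field_simp
    · -- L a = 0 → (a * (δ-c))^q = a * (δ-c)
      simp only [hL, sub_eq_zero] at ha
      rw [mul_pow, hdq, ha]
    · field_simp
    · field_simp
  -- witness in the fiber
  have hδd : δ ^ q - δ ≠ 0 := sub_ne_zero.mpr hδ
  set a₀ : F := (e - e ^ q) / (δ ^ q - δ) with ha₀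
  have ha₀q : a₀ ^ q = a₀ := by
    rw [ha₀, div_pow, sub_pow_char, sub_pow_char, hqq, hqq]
    rw [show e ^ q - e = -(e - e ^ q) by ring, show δ - δ ^ q = -(δ ^ q - δ) by ring,
      neg_div_neg_eq]
  have hLa₀ : L a₀ = e - e ^ q := by
    simp only [hL, ha₀q]
    have : a₀ * (δ ^ q - δ) = e - e ^ q := div_mul_cancel₀ _ hδd
    linear_combination this
  have hfibw : (univ.filter fun a => L a = e - e ^ q).card = q := by
    rw [aux_fiber F L hLadd a₀ _ hLa₀, hK, hS]
  -- unique solution with a ^ q = a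
  have hone : (univ.filter fun a => a ^ q = a ∧ L a = e - e ^ q).card = 1 := by
    rw [Finset.card_eq_one]
    refine ⟨a₀, ?_⟩
    ext x
    simp only [mem_filter, mem_univ, true_and, Finset.mem_singleton]
    constructor
    · rintro ⟨hx, hLx⟩
      simp only [hL, hx] at hLx
      have : x * (δ ^ q - δ) = e - e ^ q := by linear_combination hLx
      rw [ha₀, ← this, mul_div_assoc, div_self hδd, mul_one]
    · rintro rfl
      exact ⟨ha₀q, hLa₀⟩
  -- split
  have hsplit := Finset.card_filter_add_card_filter_not
    (s := univ.filter fun a : F => L a = e - e ^ q) (p := fun a => a ^ q = a)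
  rw [Finset.filter_filter, Finset.filter_filter] at hsplit
  have e1 : (univ.filter fun a => L a = e - e ^ q ∧ a ^ q = a).card = 1 := by
    rw [← hone]; congr 1; apply Finset.filter_congr; intro x _; tauto
  have e2 : (univ.filter fun a : F => a ^ q ≠ a ∧
      a ^ q * (δ ^ q - c) - a * (δ - c) = e - e ^ q).card
      = (univ.filter fun a => L a = e - e ^ q ∧ ¬ a ^ q = a).card := by
    congr 1; apply Finset.filter_congr; intro x _
    simp only [hL]; tauto
  rw [e2]
  omega

/-- For `q` an odd prime, `F = 𝔽_{q²}`, `δ ∈ A_q = F \ 𝔽_q` and `s₀ ∈ 𝔽_q`: if `a` is uniform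
on `A_q` and `e` is any `F`-valued random variable (with law `ν`) independent of `a`, then
`m_δ = ((aδ)^q − aδ)/(a^q − a) + s₀ + (e^q − e)/(a^q − a)` is uniform on `𝔽_q`, i.e. each
element `z` fixed by Frobenius has probability `1/q`. -/
theorem stmt_3 (q : ℕ) (hq : q.Prime) (hodd : Odd q) (F : Type) [Field F] [Fintype F]
    [DecidableEq F] (hF : Fintype.card F = q ^ 2) (δ : F) (hδ : δ ^ q ≠ δ)
    (s₀ : F) (hs₀ : s₀ ^ q = s₀)
    (A : Finset F) (hA : A = Finset.univ.filter (fun a : F => a ^ q ≠ a)) (hAne : A.Nonempty)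
    (ν : PMF F) (z : F) (hz : z ^ q = z) :
    ((PMF.uniformOfFinset A hAne).bind (fun a =>
        ν.map (fun e =>
          ((a * δ) ^ q - a * δ) / (a ^ q - a) + s₀ + (e ^ q - e) / (a ^ q - a)))) z
      = 1 / (q : ENNReal) := by

  have hq2 : 2 ≤ q := hq.two_le
  haveI : CharP F q := aux_charP q hq F hF
  haveI : Fact q.Prime := ⟨hq⟩
  set c : F := z - s₀ with hcdef
  have hc : c ^ q = c := by rw [hcdef, sub_pow_char, hz, hs₀]
  have hcount := fun e : F => (aux_count q hq hq2 F hF δ hδ c hc e).1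
  have hS := (aux_count q hq hq2 F hF δ hδ c hc 0).2
  have hAcard : A.card = q ^ 2 - q := by
    have h := Finset.card_filter_add_card_filter_not
      (s := (univ : Finset F)) (p := fun a : F => a ^ q = a)
    rw [Finset.card_univ, hF, hS] at h
    have : A.card = (univ.filter fun a : F => ¬ a ^ q = a).card := by
      rw [hA]
    omega
  -- the pointwise fiber count
  have key : ∀ e : F, (univ.filter fun a : F =>
      a ∈ A ∧ z = ((a * δ) ^ q - a * δ) / (a ^ q - a) + s₀ + (e ^ q - e) / (a ^ q - a)).card
      = q - 1 := by
    intro e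
    rw [← hcount e]
    congr 1
    apply Finset.filter_congr
    intro a _
    rw [hA, Finset.mem_filter]
    simp only [Finset.mem_univ, true_and]
    constructor
    · rintro ⟨ha, h⟩
      refine ⟨ha, ?_⟩
      have hne : a ^ q - a ≠ 0 := sub_ne_zero.mpr ha
      rw [mul_pow] at h
      field_simp at h
      linear_combination -h + (a - a ^ q) * hcdef
    · rintro ⟨ha, h⟩
      refine ⟨ha, ?_⟩
      have hne : a ^ q - a ≠ 0 := sub_ne_zero.mpr ha
      rw [mul_pow]
      field_simp
      linear_combination -h + (a - a ^ q) * hcdef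
  -- PMF computation
  rw [PMF.bind_apply]
  simp only [PMF.map_apply, PMF.uniformOfFinset_apply]
  simp only [← ENNReal.tsum_mul_left]
  rw [ENNReal.tsum_comm]
  have inner : ∀ e : F, (∑' a : F, (if a ∈ A then ((A.card : ENNReal))⁻¹ else 0) *
      (if z = ((a * δ) ^ q - a * δ) / (a ^ q - a) + s₀ + (e ^ q - e) / (a ^ q - a)
        then ν e else 0))
      = ((q : ENNReal))⁻¹ * ν e := by
    intro e
    rw [tsum_fintype]
    have : ∀ a : F, (if a ∈ A then ((A.card : ENNReal))⁻¹ else 0) *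
        (if z = ((a * δ) ^ q - a * δ) / (a ^ q - a) + s₀ + (e ^ q - e) / (a ^ q - a)
          then ν e else 0)
        = if (a ∈ A ∧ z = ((a * δ) ^ q - a * δ) / (a ^ q - a) + s₀ + (e ^ q - e) / (a ^ q - a))
            then ((A.card : ENNReal))⁻¹ * ν e else 0 := by
      intro a; split_ifs <;> first | rfl | exact zero_mul _ | exact mul_zero _ | tauto
    rw [Finset.sum_congr rfl fun a _ => this a, ← Finset.sum_filter, Finset.sum_const,
      key e, hAcard]
    rw [nsmul_eq_mul, ← mul_assoc]
    congr 1
    -- arithmetic in ENNReal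
    have h1 : (q ^ 2 - q : ℕ) = q * (q - 1) := by
      rw [Nat.mul_sub, mul_one, sq]
    rw [h1, Nat.cast_mul,
      ENNReal.mul_inv (Or.inr (ENNReal.natCast_ne_top _)) (Or.inl (ENNReal.natCast_ne_top _)),
      mul_comm ((q : ENNReal))⁻¹ _, ← mul_assoc,
      ENNReal.mul_inv_cancel (by exact_mod_cast (by omega : q - 1 ≠ 0))
        (ENNReal.natCast_ne_top _), one_mul]
  convert (tsum_congr inner).trans
    (show (∑' e : F, ((q : ENNReal))⁻¹ * ν e) = 1 / (q : ENNReal) by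
      rw [ENNReal.tsum_mul_left, ν.tsum_coe, mul_one, one_div]) using 7
end

section
/- Let K = Q(ζ_p, √d) with p odd prime, d > 1 squarefree, d ≡ 2,3 (mod 4), gcd(d,p)=1, and let n = p−1. Let ι be the adjusted canonical embedding of K into R^{2n}. For any e ∈ O_K written as e = e_1 + e_2√d with e_1, e_2 ∈ Z[ζ_p], one has ‖ι(e)‖² = ‖ι_M(e_1)‖² + d·‖ι_M(e_2)‖², where ι_M is the adjusted canonical embedding of M = Q(ζ_p) into R^n (viewed via the 2n embeddings of K). In particular, if e_2 ≠ 0 then ‖ι(e)‖ ≥ √(2nd). -/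
open scoped BigOperators

open Polynomial in
lemma auxA {L : Type} [Field L] [CharZero L] {p : ℕ} (hp : p.Prime) (hpo : Odd p)
    {ζ : L} (hζ : IsPrimitiveRoot ζ p) {z w : L}
    (hz : z ∈ Algebra.adjoin ℤ ({ζ} : Set L)) (hw : w ∈ Algebra.adjoin ℤ ({ζ} : Set L))
    (h : z ^ 2 = 2 * w) : ∃ u ∈ Algebra.adjoin ℤ ({ζ} : Set L), z = 2 * u := by
  rw [Algebra.adjoin_singleton_eq_range_aeval] at hz hw
  obtain ⟨g, hg'⟩ := hz
  obtain ⟨f, hf'⟩ := hw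
  have hg : Polynomial.aeval ζ g = z := hg'
  have hf : Polynomial.aeval ζ f = w := hf'
  set q : ℤ[X] := g * g - 2 * f with hq
  have hq0 : Polynomial.aeval ζ q = 0 := by
    simp only [hq, map_sub, map_mul, map_ofNat, hg, hf]
    rw [← sq]; rw [h]; ring
  have hdvd : cyclotomic p ℤ ∣ q := by
    rw [← map_dvd_map (algebraMap ℤ ℚ) (algebraMap ℤ ℚ).injective_int (cyclotomic.monic p ℤ),
      map_cyclotomic, cyclotomic_eq_minpoly_rat hζ hp.pos]
    exact minpoly.dvd ℚ ζ (by rwa [aeval_map_algebraMap])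
  obtain ⟨u, hu⟩ := hdvd
  -- reduce mod 2
  have hsep : ((X : (ZMod 2)[X]) ^ p - 1).Separable := by
    refine X_pow_sub_one_separable_iff.2 ?_
    have : ((p : ZMod 2)) = ((p % 2 : ℕ) : ZMod 2) := (ZMod.natCast_mod p 2).symm
    rw [this, Nat.odd_iff.mp hpo]
    simp
  have hsq : Squarefree (cyclotomic p (ZMod 2)) :=
    (hsep.of_dvd (cyclotomic.dvd_X_pow_sub_one p (ZMod 2))).squarefree
  have hbar : (g.map (Int.castRingHom (ZMod 2))) ^ 2
      = cyclotomic p (ZMod 2) * (u.map (Int.castRingHom (ZMod 2))) := by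
    have := congrArg (Polynomial.map (Int.castRingHom (ZMod 2))) hu
    simp only [hq, Polynomial.map_sub, Polynomial.map_mul, Polynomial.map_ofNat,
      map_cyclotomic] at this
    rw [sq]
    rw [← this]
    have h2 : ((2 : (ZMod 2)[X])) = 0 := CharTwo.two_eq_zero
    rw [h2]; ring
  have hdvd2 : cyclotomic p (ZMod 2) ∣ g.map (Int.castRingHom (ZMod 2)) :=
    (hsq.dvd_pow_iff_dvd two_ne_zero).1 ⟨_, hbar⟩
  obtain ⟨vb, hvb⟩ := hdvd2
  obtain ⟨v, hv⟩ := Polynomial.map_surjective (Int.castRingHom (ZMod 2))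
    ZMod.intCast_surjective vb
  set P : ℤ[X] := g - cyclotomic p ℤ * v with hP
  have hPmap : P.map (Int.castRingHom (ZMod 2)) = 0 := by
    simp only [hP, Polynomial.map_sub, Polynomial.map_mul, map_cyclotomic, hv, ← hvb, sub_self]
  have hC2 : (C 2 : ℤ[X]) ∣ P := by
    rw [C_dvd_iff_dvd_coeff]
    intro i
    have : (Int.castRingHom (ZMod 2)) (P.coeff i) = 0 := by
      rw [← Polynomial.coeff_map, hPmap, Polynomial.coeff_zero]
    exact_mod_cast (ZMod.intCast_zmod_eq_zero_iff_dvd _ 2).1 this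
  obtain ⟨W, hW⟩ := hC2
  refine ⟨Polynomial.aeval ζ W, by rw [Algebra.adjoin_singleton_eq_range_aeval]; exact ⟨W, rfl⟩, ?_⟩
  have hcyc0 : Polynomial.aeval ζ (cyclotomic p ℤ) = 0 := by
    rw [aeval_def, ← Polynomial.eval_map, map_cyclotomic]
    exact hζ.isRoot_cyclotomic hp.pos
  have : g = cyclotomic p ℤ * v + C 2 * W := by rw [← hW]; ring
  rw [← hg, this, map_add, map_mul, map_mul, hcyc0, zero_mul, zero_add, aeval_C]
  rw [map_ofNat]

open Polynomial in
lemma auxB {L : Type} [Field L] [CharZero L] {p : ℕ+} (hp : (p:ℕ).Prime) (hpo : Odd (p:ℕ))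
    [IsCyclotomicExtension {(p:ℕ)} ℚ L] {ζ : L} (hζ : IsPrimitiveRoot ζ (p:ℕ))
    {d : ℤ} (hd4 : d % 4 = 2 ∨ d % 4 = 3) (b : L) : b ^ 2 ≠ (d : L) := by
  intro hb
  have hb_int : IsIntegral ℤ b :=
    ⟨X ^ 2 - C d, monic_X_pow_sub_C d two_ne_zero, by
      simp only [eval₂_sub, eval₂_pow, eval₂_X, eval₂_C, Int.coe_castRingHom]
      rw [hb]; exact sub_self _⟩
  haveI : Fact (Nat.Prime (p:ℕ)) := Fact.mk hp
  haveI := IsCyclotomicExtension.Rat.isIntegralClosure_adjoin_singleton_of_prime hζ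
  obtain ⟨y, hy⟩ := (IsIntegralClosure.isIntegral_iff
    (A := Algebra.adjoin ℤ ({ζ} : Set L))).1 hb_int
  have hbR : b ∈ Algebra.adjoin ℤ ({ζ} : Set L) := by rw [← hy]; exact y.2
  have hInt : ∀ x ∈ Algebra.adjoin ℤ ({ζ} : Set L), IsIntegral ℤ x := fun x hx =>
    (IsIntegralClosure.isIntegral_iff (A := Algebra.adjoin ℤ ({ζ} : Set L))).2 ⟨⟨x, hx⟩, rfl⟩
  have hmap : ∀ q : ℚ, algebraMap ℚ L q = (q : L) := fun q => by
    exact eq_ratCast (algebraMap ℚ L) q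
  rcases hd4 with h4 | h4
  · obtain ⟨c, hc⟩ : (2:ℤ) ∣ d := by omega
    have hcL : (d : L) = 2 * ((c : ℤ) : L) := by exact_mod_cast congrArg (fun t : ℤ => (t : L)) hc
    have h2 : b ^ 2 = 2 * ((c : ℤ) : L) := by rw [hb, hcL]
    obtain ⟨u, huR, hu⟩ := auxA hp hpo hζ hbR (Subalgebra.intCast_mem _ c) h2
    have huI : IsIntegral ℤ u := hInt u huR
    have key : algebraMap ℚ L ((d : ℚ) / 4) = u ^ 2 := by
      rw [map_div₀]
      have h1 : algebraMap ℚ L ((d:ℚ)) = (d : L) := by rw [hmap]; push_cast; ring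
      have h2' : algebraMap ℚ L (4:ℚ) = (4 : L) := by rw [hmap]; norm_num
      rw [h1, h2', ← hb, hu]
      have : ((4:L)) ≠ 0 := by norm_num
      field_simp
      ring
    have hdint : IsIntegral ℤ ((d:ℚ)/4) :=
      (isIntegral_algebraMap_iff (algebraMap ℚ L).injective).1 (key ▸ huI.pow 2)
    obtain ⟨k, hk⟩ := IsIntegrallyClosed.isIntegral_iff.1 hdint
    have hdk : d = k * 4 := by
      have : ((k:ℚ)) = (d:ℚ)/4 := hk
      field_simp at this
      exact_mod_cast this.symm
    omega
  · obtain ⟨c, hc⟩ : (2:ℤ) ∣ (d + 1) := by omega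
    have hbm : b - 1 ∈ Algebra.adjoin ℤ ({ζ} : Set L) :=
      Subalgebra.sub_mem _ hbR (Subalgebra.one_mem _)
    have hd1 : (d : L) + 1 = 2 * ((c : ℤ) : L) := by
      exact_mod_cast congrArg (fun t : ℤ => (t : L)) hc
    have h2 : (b - 1) ^ 2 = 2 * (((c : ℤ) : L) - b) := by linear_combination hb + hd1
    obtain ⟨u, huR, hu⟩ := auxA hp hpo hζ hbm
      (Subalgebra.sub_mem _ (Subalgebra.intCast_mem _ c) hbR) h2
    have huI : IsIntegral ℤ u := hInt u huR
    have key : algebraMap ℚ L (((d:ℚ) - 1) / 4) = u + u ^ 2 := by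
      rw [map_div₀, map_sub, map_one]
      have h1 : algebraMap ℚ L ((d:ℚ)) = (d : L) := by rw [hmap]; push_cast; ring
      have h2' : algebraMap ℚ L (4:ℚ) = (4 : L) := by rw [hmap]; norm_num
      rw [h1, h2']
      have hbu : b = 1 + 2 * u := by linear_combination hu
      have hdL : (d:L) = 1 + 4 * u + 4 * u ^ 2 := by rw [← hb, hbu]; ring
      rw [hdL]
      have : ((4:L)) ≠ 0 := by norm_num
      field_simp
      ring
    have hdint : IsIntegral ℤ (((d:ℚ) - 1)/4) :=
      (isIntegral_algebraMap_iff (algebraMap ℚ L).injective).1 (key ▸ (huI.add (huI.pow 2)))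
    obtain ⟨k, hk⟩ := IsIntegrallyClosed.isIntegral_iff.1 hdint
    have hdk : d - 1 = k * 4 := by
      have : ((k:ℚ)) = ((d:ℚ) - 1)/4 := hk
      field_simp at this
      exact_mod_cast this.symm
    omega

open Polynomial IntermediateField in
set_option maxHeartbeats 2000000 in

/-- For `K = ℚ(ζ_p, √d)` of degree `2n`, `n = p − 1`, and `e = e₁ + e₂√d` with
`e₁, e₂ ∈ ℤ[ζ_p]`: the adjusted canonical embedding (whose squared norm is the sum of
`|σ(·)|²` over the `2n` embeddings `σ : K → ℂ`) satisfies
`‖ι(e)‖² = ‖ι_M(e₁)‖² + d·‖ι_M(e₂)‖²`; in particular, if `e₂ ≠ 0` then `‖ι(e)‖ ≥ √(2nd)`. -/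
theorem stmt_7 (p : ℕ) (hp : p.Prime) (hpo : Odd p) (d : ℤ) (hd : 1 < d)
    (hsf : Squarefree d) (hcop : IsCoprime d (p : ℤ)) (hd4 : d % 4 = 2 ∨ d % 4 = 3)
    (n : ℕ) (hn : n = p - 1)
    (K : Type) [Field K] [NumberField K]
    (ζ α : K) (hζ : IsPrimitiveRoot ζ p) (hα : α ^ 2 = (d : K))
    (htop : Algebra.adjoin ℚ ({ζ, α} : Set K) = ⊤)
    (e₁ e₂ : K) (he₁ : e₁ ∈ Algebra.adjoin ℤ ({ζ} : Set K))
    (he₂ : e₂ ∈ Algebra.adjoin ℤ ({ζ} : Set K)) :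
    (∑ σ : K →+* ℂ, ‖σ (e₁ + e₂ * α)‖ ^ 2 =
        ∑ σ : K →+* ℂ, ‖σ e₁‖ ^ 2 +
          (d : ℝ) * ∑ σ : K →+* ℂ, ‖σ e₂‖ ^ 2) ∧
      (e₂ ≠ 0 →
        Real.sqrt (∑ σ : K →+* ℂ, ‖σ (e₁ + e₂ * α)‖ ^ 2) ≥
          Real.sqrt (2 * n * (d : ℝ))) := by
  classical
  set np : ℕ+ := ⟨p, hp.pos⟩ with hnp
  set F : IntermediateField ℚ K := ℚ⟮ζ⟯ with hF
  have hζmemF : ζ ∈ F := IntermediateField.mem_adjoin_simple_self ℚ ζ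
  have hζQint : IsIntegral ℚ ζ := IsIntegral.of_finite ℚ ζ
  haveI : CharZero F := charZero_of_injective_algebraMap (algebraMap ℚ F).injective
  haveI hcyc : IsCyclotomicExtension {(np:ℕ)} ℚ F := by
    have H := IntermediateField.adjoin_simple_toSubalgebra_of_isAlgebraic hζQint.isAlgebraic
    refine IsCyclotomicExtension.equiv _ _ _ (h := ?_) (.refl : F.toSubalgebra ≃ₐ[ℚ] _)
    rw [H]
    exact ((show IsPrimitiveRoot ζ ((np : ℕ+) : ℕ) from hζ).adjoin_isCyclotomicExtension ℚ)
  have hζF' : IsPrimitiveRoot (⟨ζ, hζmemF⟩ : F) p := by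
    apply IsPrimitiveRoot.of_map_of_injective (f := algebraMap F K)
    · exact hζ
    · exact (algebraMap F K).injective
  -- no square root of d in F
  have hno : ∀ b : F, b ^ 2 ≠ ((d : ℤ) : F) :=
    fun b => auxB (p := np) hp hpo hζF' hd4 b
  -- minpoly of α over F
  have hα_int : IsIntegral F α := IsIntegral.of_finite F α
  have haev : Polynomial.aeval α ((X : F[X]) ^ 2 - C ((d : ℤ) : F)) = 0 := by
    simp only [map_sub, map_pow, aeval_X, aeval_C]
    have : (algebraMap F K) ((d : ℤ) : F) = ((d : ℤ) : K) := by
      push_cast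
      rfl
    rw [this, hα, sub_self]
  have hirr : Irreducible ((X : F[X]) ^ 2 - C ((d : ℤ) : F)) :=
    X_pow_sub_C_irreducible_of_prime Nat.prime_two hno
  have hmin : minpoly F α = (X : F[X]) ^ 2 - C ((d : ℤ) : F) :=
    (minpoly.eq_of_irreducible_of_monic hirr haev (monic_X_pow_sub_C _ two_ne_zero)).symm
  -- adjoin α over F is everything
  have htopIF : IntermediateField.adjoin ℚ ({ζ, α} : Set K) = ⊤ := by
    have h1 := IntermediateField.algebra_adjoin_le_adjoin ℚ ({ζ, α} : Set K)
    rw [htop] at h1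
    rw [← IntermediateField.top_toSubalgebra] at *
    apply IntermediateField.toSubalgebra_injective
    exact le_antisymm le_top h1
  have hFα : F⟮α⟯ = (⊤ : IntermediateField F K) := by
    have h2 : IntermediateField.restrictScalars ℚ F⟮α⟯ =
        IntermediateField.adjoin ℚ (({ζ} : Set K) ∪ {α}) :=
      IntermediateField.adjoin_adjoin_left ℚ {ζ} {α}
    apply IntermediateField.restrictScalars_injective ℚ
    rw [h2, Set.singleton_union, IntermediateField.restrictScalars_top]
    exact htopIF
  -- ranks
  let eqv : F⟮α⟯ ≃ₐ[F] K := (IntermediateField.equivOfEq hFα).trans IntermediateField.topEquiv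
  have hrank2 : Module.finrank F K = 2 := by
    rw [← eqv.toLinearEquiv.finrank_eq, IntermediateField.adjoin.finrank hα_int, hmin]
    exact natDegree_X_pow_sub_C
  have hrankF : Module.finrank ℚ F = n := by
    rw [IsCyclotomicExtension.finrank (n := (np:ℕ)) F (Polynomial.cyclotomic.irreducible_rat np.pos)]
    have : ((np : ℕ+) : ℕ) = p := rfl
    rw [this, Nat.totient_prime hp, hn]
  have hrankK : Module.finrank ℚ K = 2 * n := by
    have h3 := Module.finrank_mul_finrank ℚ (↥F) K
    rw [hrankF, hrank2] at h3
    omega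
  have hcard : Fintype.card (K →+* ℂ) = 2 * n := by
    rw [NumberField.Embeddings.card K ℂ, hrankK]
  -- power basis
  let pb : PowerBasis F K := (IntermediateField.adjoin.powerBasis hα_int).map eqv
  have hgen : pb.gen = α := rfl
  -- extension lemma
  have hext : ∀ σ τ : K →+* ℂ, σ ζ = τ ζ → σ α = τ α → σ = τ := by
    intro σ τ h1 h2
    refine RingHom.ext fun x => ?_
    have hx : x ∈ Algebra.adjoin ℚ ({ζ, α} : Set K) := htop ▸ Algebra.mem_top
    induction hx using Algebra.adjoin_induction with
    | mem y hy =>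
      rcases hy with rfl | hy
      · exact h1
      · rw [Set.mem_singleton_iff] at hy; subst hy; exact h2
    | algebraMap r =>
      rw [eq_ratCast (algebraMap ℚ K) r, map_ratCast, map_ratCast]
    | add x y _ _ ihx ihy => rw [map_add, map_add, ihx, ihy]
    | mul x y _ _ ihx ihy => rw [map_mul, map_mul, ihx, ihy]
  -- flip
  have hflip : ∀ σ : K →+* ℂ, ∃ τ : K →+* ℂ, τ α = -σ α ∧ ∀ x ∈ F, τ x = σ x := by
    intro σ
    let ρ : F →+* ℂ := σ.comp (algebraMap F K)
    letI : Algebra F ℂ := ρ.toAlgebra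
    have hdmap : (algebraMap F ℂ) ((d : ℤ) : F) = ((d : ℤ) : ℂ) := by
      show ρ ((d : ℤ) : F) = _
      show σ ((algebraMap F K) ((d : ℤ) : F)) = _
      rw [map_intCast (algebraMap F K), map_intCast]
    have hroot : (Polynomial.aeval (-σ α)) (minpoly F pb.gen) = 0 := by
      rw [hgen, hmin]
      simp only [map_sub, map_pow, aeval_X, aeval_C]
      rw [hdmap, neg_pow, ← map_pow, hα, map_intCast]
      norm_num
    refine ⟨(pb.lift (-σ α) hroot).toRingHom, ?_, ?_⟩
    · show (pb.lift (-σ α) hroot) α = -σ α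
      have hlg := pb.lift_gen (-σ α) hroot
      rw [hgen] at hlg
      exact hlg
    · intro x hx
      show (pb.lift (-σ α) hroot) x = σ x
      have : (pb.lift (-σ α) hroot) ((algebraMap F K) ⟨x, hx⟩) = (algebraMap F ℂ) ⟨x, hx⟩ :=
        AlgHom.commutes _ _
      rw [show (algebraMap F K) (⟨x, hx⟩ : F) = x from rfl] at this
      rw [this]
      rfl
  -- e₁ e₂ in F
  have hadj_le : Algebra.adjoin ℤ ({ζ} : Set K) ≤ Subalgebra.restrictScalars ℤ F.toSubalgebra := by
    apply Algebra.adjoin_le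
    intro x hx
    rw [Set.mem_singleton_iff] at hx
    subst hx
    exact hζmemF
  have he₁F : e₁ ∈ F := hadj_le he₁
  have he₂F : e₂ ∈ F := hadj_le he₂
  -- involution on embeddings
  let t : (K →+* ℂ) → (K →+* ℂ) := fun σ => Classical.choose (hflip σ)
  have ht1 : ∀ σ : K →+* ℂ, (t σ) α = -σ α := fun σ => (Classical.choose_spec (hflip σ)).1
  have ht2 : ∀ σ : K →+* ℂ, ∀ x ∈ F, (t σ) x = σ x :=
    fun σ => (Classical.choose_spec (hflip σ)).2
  have hinv : Function.Involutive t := by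
    intro σ
    apply hext
    · rw [ht2 (t σ) ζ hζmemF, ht2 σ ζ hζmemF]
    · rw [ht1 (t σ), ht1 σ, neg_neg]
  -- pointwise identity
  have hpt : ∀ σ : K →+* ℂ,
      ‖σ (e₁ + e₂ * α)‖ ^ 2 + ‖(t σ) (e₁ + e₂ * α)‖ ^ 2 =
        2 * ‖σ e₁‖ ^ 2 + 2 * (d : ℝ) * ‖σ e₂‖ ^ 2 := by
    intro σ
    have h1 : (t σ) (e₁ + e₂ * α) = σ e₁ - σ e₂ * σ α := by
      rw [map_add, map_mul, ht1 σ, ht2 σ e₁ he₁F, ht2 σ e₂ he₂F]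
      ring
    have h2 : σ (e₁ + e₂ * α) = σ e₁ + σ e₂ * σ α := by rw [map_add, map_mul]
    have habs : ‖σ α‖ ^ 2 = (d : ℝ) := by
      rw [← norm_pow, ← map_pow, hα, map_intCast, Complex.norm_intCast]
      exact abs_of_nonneg (by exact_mod_cast le_of_lt (lt_trans one_pos hd))
    rw [h1, h2]
    have expand : ∀ u v : ℂ, ‖u + v‖ ^ 2 + ‖u - v‖ ^ 2 =
        2 * ‖u‖ ^ 2 + 2 * ‖v‖ ^ 2 := by
      intro u v
      rw [Complex.sq_norm, Complex.sq_norm, Complex.sq_norm, Complex.sq_norm]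
      simp only [Complex.normSq_apply, Complex.add_re, Complex.add_im, Complex.sub_re,
        Complex.sub_im]
      ring
    rw [expand (σ e₁) (σ e₂ * σ α), norm_mul, mul_pow, habs]
    ring
  -- part 1
  have hsum2 : ∑ σ : K →+* ℂ, ‖(t σ) (e₁ + e₂ * α)‖ ^ 2 =
      ∑ σ : K →+* ℂ, ‖σ (e₁ + e₂ * α)‖ ^ 2 :=
    Equiv.sum_comp (hinv.toPerm t) (fun σ : K →+* ℂ => ‖σ (e₁ + e₂ * α)‖ ^ 2)
  have part1 : ∑ σ : K →+* ℂ, ‖σ (e₁ + e₂ * α)‖ ^ 2 =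
      ∑ σ : K →+* ℂ, ‖σ e₁‖ ^ 2 +
        (d : ℝ) * ∑ σ : K →+* ℂ, ‖σ e₂‖ ^ 2 := by
    have hc : ∑ σ : K →+* ℂ,
        (‖σ (e₁ + e₂ * α)‖ ^ 2 + ‖(t σ) (e₁ + e₂ * α)‖ ^ 2) =
        ∑ σ : K →+* ℂ,
          (2 * ‖σ e₁‖ ^ 2 + 2 * (d : ℝ) * ‖σ e₂‖ ^ 2) :=
      Finset.sum_congr rfl fun σ _ => hpt σ
    rw [Finset.sum_add_distrib, hsum2, Finset.sum_add_distrib, ← Finset.mul_sum,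
      ← Finset.mul_sum] at hc
    linarith
  refine ⟨part1, ?_⟩
  -- part 2
  intro hne
  have hd0 : (0:ℝ) ≤ (d:ℝ) := by exact_mod_cast le_of_lt (lt_trans one_pos hd)
  -- e₂ is an algebraic integer
  have hintadj : ∀ x ∈ Algebra.adjoin ℤ ({ζ} : Set K), IsIntegral ℤ x := by
    have hζint : IsIntegral ℤ ζ := ⟨X ^ p - C 1, monic_X_pow_sub_C 1 hp.ne_zero, by
      simp [hζ.pow_eq_one]⟩
    intro x hx
    induction hx using Algebra.adjoin_induction with
    | mem y hy => rw [Set.mem_singleton_iff] at hy; subst hy; exact hζint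
    | algebraMap r => exact isIntegral_algebraMap
    | add x y _ _ ihx ihy => exact ihx.add ihy
    | mul x y _ _ ihx ihy => exact ihx.mul ihy
  have he₂int : IsIntegral ℤ e₂ := hintadj e₂ he₂
  have hNint : IsIntegral ℤ (Algebra.norm ℚ e₂) :=
    Algebra.isIntegral_norm (K := ℚ) (L := K) (R := ℤ) he₂int
  obtain ⟨m, hm⟩ := IsIntegrallyClosed.isIntegral_iff.1 hNint
  have hNz : Algebra.norm ℚ e₂ ≠ 0 := Algebra.norm_ne_zero_iff.mpr hne
  have hm0 : m ≠ 0 := by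
    intro h0
    exact hNz (by rw [← hm, h0, map_zero])
  have hprodA : ∏ σ : K →+* ℂ, ‖σ e₂‖ =
      ‖(algebraMap ℚ ℂ) (Algebra.norm ℚ e₂)‖ := by
    rw [Algebra.norm_eq_prod_embeddings, Complex.norm_prod]
    exact Fintype.prod_equiv (RingHom.equivRatAlgHom K ℂ) _ _
      (fun σ => by simp [RingHom.equivRatAlgHom_apply])
  have h1N : (1:ℝ) ≤ ‖(algebraMap ℚ ℂ) (Algebra.norm ℚ e₂)‖ := by
    rw [← hm]
    have hcast : ((algebraMap ℚ ℂ) ((algebraMap ℤ ℚ) m)) = ((m : ℤ) : ℂ) := by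
      rw [eq_ratCast]
      push_cast
      rfl
    rw [hcast, Complex.norm_intCast]
    have := Int.one_le_abs hm0
    calc (1:ℝ) = ((1:ℤ):ℝ) := by norm_num
    _ ≤ ((|m| : ℤ) : ℝ) := by exact_mod_cast this
    _ = |((m:ℤ):ℝ)| := by push_cast; rfl
  have hprod1 : (1:ℝ) ≤ ∏ σ : K →+* ℂ, ‖σ e₂‖ ^ 2 := by
    rw [Finset.prod_pow]
    have hx : (1:ℝ) ≤ ∏ σ : K →+* ℂ, ‖σ e₂‖ := hprodA ▸ h1N
    nlinarith [hx]
  -- AM-GM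
  have hp3 : 2 < p := by
    have h1 := hp.two_le
    have h2 := Nat.odd_iff.mp hpo
    omega
  have hn0 : 0 < n := by omega
  have h2n : (0:ℝ) < (2*n:ℝ) := by positivity
  have amgm := Real.geom_mean_le_arith_mean_weighted Finset.univ
      (fun _ => 1 / (2*n : ℝ)) (fun σ : K →+* ℂ => ‖σ e₂‖ ^ 2)
      (fun i _ => by positivity)
      (by
        rw [Finset.sum_const, Finset.card_univ, hcard, nsmul_eq_mul]
        push_cast
        field_simp)
      (fun i _ => sq_nonneg _)
  have hL : (1:ℝ) ≤ ∏ σ : K →+* ℂ, (‖σ e₂‖ ^ 2) ^ ((1:ℝ) / (2*n)) := by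
    rw [Real.finset_prod_rpow _ _ (fun i _ => sq_nonneg _) _]
    exact Real.one_le_rpow hprod1 (by positivity)
  have hsum_ge : (2*n:ℝ) ≤ ∑ σ : K →+* ℂ, ‖σ e₂‖ ^ 2 := by
    have hle := le_trans hL amgm
    rw [← Finset.mul_sum, div_mul_eq_mul_div, one_mul, le_div_iff₀ h2n] at hle
    linarith
  apply Real.sqrt_le_sqrt
  rw [part1]
  have hsA : (0:ℝ) ≤ ∑ σ : K →+* ℂ, ‖σ e₁‖ ^ 2 :=
    Finset.sum_nonneg fun i _ => sq_nonneg _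
  nlinarith [hsum_ge, hd0, hsA]
end

section
/- Let m = 2^d be a power of 2, n = m/2, r > 0, and R = Z[ζ_m]. The PLWE distribution on R, obtained by sampling e = Σ_{i=0}^{n-1} e_i ζ_m^i with each e_i drawn independently from the discrete Gaussian D_{Z,r}, equals the non-dual RLWE distribution D_{ι(R), r√n}, i.e., both assign to each x ∈ R probability proportional to exp(−‖ι(x)‖²/(n r²)). -/
open scoped BigOperators

lemma aux_geom {n : ℕ} {c : ℂ} (hc : c ^ n = 1) (hc1 : c ≠ 1) :
    ∑ j : Fin n, c ^ (j : ℕ) = 0 := by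
  rw [Fin.sum_univ_eq_sum_range, geom_sum_eq hc1, hc, sub_self, zero_div]

lemma aux_key (n : ℕ) (hn : 0 < n) (ξ : ℂ) (hξ : IsPrimitiveRoot ξ (2 * n))
    (x : Fin n → ℤ) :
    ∑ j : Fin n, (∑ i : Fin n, (x i : ℂ) * (ξ ^ (2 * (j : ℕ) + 1)) ^ (i : ℕ)) *
        (starRingEnd ℂ) (∑ i : Fin n, (x i : ℂ) * (ξ ^ (2 * (j : ℕ) + 1)) ^ (i : ℕ)) =
      (n : ℂ) * ∑ i : Fin n, (x i : ℂ) ^ 2 := by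
  have hm : (0:ℕ) < 2 * n := by omega
  have hξm : ξ ^ (2 * n) = 1 := hξ.pow_eq_one
  have hξ0 : ξ ≠ 0 := by
    intro h; rw [h] at hξm; simp [zero_pow (by omega : 2*n ≠ 0)] at hξm
  set k := 2 * n - 1 with hkdef
  have hk : k + 1 = 2 * n := by omega
  have hconj : (starRingEnd ℂ) ξ = ξ ^ k := by
    have h1 : ξ * (starRingEnd ℂ) ξ = 1 := by
      rw [Complex.mul_conj]
      norm_cast
      have h2 : Complex.normSq ξ ^ (2 * n) = 1 := by
        rw [← map_pow, hξm, map_one]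
      rcases (pow_eq_one_iff_cases.mp h2) with h | h | h
      · omega
      · exact h
      · nlinarith [Complex.normSq_nonneg ξ]
    have h4 : ξ * ξ ^ k = 1 := by rw [← pow_succ', hk, hξm]
    exact mul_left_cancel₀ hξ0 (h1.trans h4.symm)
  have hω : IsPrimitiveRoot (ξ ^ 2) n := hξ.pow hm rfl
  have expand : ∀ j : Fin n,
      (∑ i : Fin n, (x i : ℂ) * (ξ ^ (2 * (j : ℕ) + 1)) ^ (i : ℕ)) *
        (starRingEnd ℂ) (∑ i : Fin n, (x i : ℂ) * (ξ ^ (2 * (j : ℕ) + 1)) ^ (i : ℕ)) =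
      ∑ i : Fin n, ∑ i' : Fin n, (x i : ℂ) * (x i' : ℂ) *
        (ξ ^ (2 * (j : ℕ) + 1)) ^ ((i : ℕ) + k * (i' : ℕ)) := by
    intro j
    rw [map_sum, Finset.sum_mul_sum]
    refine Finset.sum_congr rfl fun i _ => Finset.sum_congr rfl fun i' _ => ?_
    rw [map_mul, map_pow, map_intCast, map_pow, hconj]
    simp only [← pow_mul]
    rw [show (2*(j:ℕ)+1) * ((i:ℕ) + k * (i':ℕ))
        = (2*(j:ℕ)+1) * (i:ℕ) + k * (2*(j:ℕ)+1) * (i':ℕ) by ring, pow_add]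
    ring
  rw [Finset.sum_congr rfl fun j _ => expand j]
  rw [Finset.sum_comm]
  have swap : ∀ i : Fin n,
      ∑ j : Fin n, ∑ i' : Fin n, (x i : ℂ) * (x i' : ℂ) *
        (ξ ^ (2 * (j : ℕ) + 1)) ^ ((i : ℕ) + k * (i' : ℕ)) =
      ∑ i' : Fin n, (x i : ℂ) * (x i' : ℂ) *
        ∑ j : Fin n, (ξ ^ (2 * (j : ℕ) + 1)) ^ ((i : ℕ) + k * (i' : ℕ)) := by
    intro i
    rw [Finset.sum_comm]
    exact Finset.sum_congr rfl fun i' _ => by rw [Finset.mul_sum]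
  rw [Finset.sum_congr rfl fun i _ => swap i]
  have inner : ∀ i i' : Fin n,
      ∑ j : Fin n, (ξ ^ (2 * (j : ℕ) + 1)) ^ ((i : ℕ) + k * (i' : ℕ)) =
      if i = i' then (n : ℂ) else 0 := by
    intro i i'
    set t := (i : ℕ) + k * (i' : ℕ) with ht
    have h5 : ∀ j : Fin n, (ξ ^ (2 * (j : ℕ) + 1)) ^ t = ξ ^ t * ((ξ ^ 2) ^ t) ^ (j : ℕ) := by
      intro j
      simp only [← pow_mul, ← pow_add]
      congr 1
      ring
    rw [Finset.sum_congr rfl fun j _ => h5 j, ← Finset.mul_sum]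
    by_cases h : i = i'
    · subst h
      have hx1 : ξ ^ t = 1 := by
        rw [ht, show (i:ℕ) + k * (i:ℕ) = (k+1) * (i:ℕ) by ring, hk, pow_mul, hξm, one_pow]
      have hx2 : (ξ ^ 2) ^ t = 1 := by rw [← pow_mul, mul_comm 2 t, pow_mul, hx1, one_pow]
      simp [hx1, hx2]
    · rw [if_neg h]
      have hndvd : ¬ (n ∣ t) := by
        intro hdvd
        apply h
        have h8 : t + (i' : ℕ) = (i : ℕ) + n * (2 * (i' : ℕ)) := by
          have hz : k * (i':ℕ) + (i':ℕ) = n * (2 * (i':ℕ)) := by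
            rw [show k*(i':ℕ)+(i':ℕ) = (k+1)*(i':ℕ) by ring, hk]; ring
          omega
        have h9 : ((i:ℕ) + n * (2 * (i':ℕ))) % n = (i:ℕ) % n := Nat.add_mul_mod_self_left _ _ _
        obtain ⟨c, hc⟩ := hdvd
        have h10 : (t + (i':ℕ)) % n = (i':ℕ) % n := by rw [hc, Nat.mul_add_mod]
        have h11 : (i:ℕ) % n = (i':ℕ) % n := by rw [← h9, ← h8, h10]
        exact Fin.ext (by rwa [Nat.mod_eq_of_lt i.isLt, Nat.mod_eq_of_lt i'.isLt] at h11)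
      have hpow : ((ξ ^ 2) ^ t) ^ n = 1 := by
        rw [← pow_mul, mul_comm t n, pow_mul, hω.pow_eq_one, one_pow]
      have hne1 : (ξ ^ 2) ^ t ≠ 1 := fun hh => hndvd ((hω.pow_eq_one_iff_dvd t).mp hh)
      rw [aux_geom hpow hne1, mul_zero]
  rw [Finset.sum_congr rfl fun i _ => Finset.sum_congr rfl fun i' _ => by rw [inner i i']]
  rw [Finset.mul_sum]
  refine Finset.sum_congr rfl fun i _ => ?_
  simp [Finset.sum_ite_eq, mul_ite, mul_zero]
  ring

/-- For `m = 2^d`, `n = m/2`, `R = ℤ[ζ_m]` and `r > 0`: the PLWE distribution, which assigns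
to `x = ∑ x_i ζ^i` probability proportional to `∏ exp(−x_i²/r²)`, equals the non-dual RLWE
distribution `D_{ι(R), r√n}`, which assigns probability proportional to
`exp(−‖ι(x)‖²/(n r²))` where `‖ι(x)‖² = ∑_{σ : K →+* ℂ} |σ(x)|²`. -/
theorem stmt_8 (d : ℕ) (hd : 1 ≤ d) (m n : ℕ) (hm : m = 2 ^ d) (hn : n = m / 2) (r : ℝ)
    (hr : 0 < r) (K : Type) [Field K] [NumberField K] (ζ : K) (hζ : IsPrimitiveRoot ζ m)
    (hK : Algebra.adjoin ℚ ({ζ} : Set K) = ⊤) (x : Fin n → ℤ) :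
    ∏ i : Fin n, Real.exp (-(x i : ℝ) ^ 2 / r ^ 2) =
      Real.exp (-(∑ σ : K →+* ℂ, ‖σ (∑ i : Fin n, (x i : K) * ζ ^ (i : ℕ))‖ ^ 2) /
        (n * r ^ 2)) := by
  have h2 : 2 ^ d = 2 * 2 ^ (d - 1) := by
    conv_lhs => rw [show d = (d - 1) + 1 by omega, pow_succ']
  have hB : 0 < 2 ^ (d - 1) := by positivity
  have hm' : m = 2 * 2 ^ (d - 1) := by rw [hm, h2]
  have hmn : m = 2 * n := by omega
  have hm0 : 0 < m := by omega
  have hnpos : 0 < n := by omega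
  -- totient of m is n
  have htot : Nat.totient m = n := by
    rw [hm, show d = (d-1)+1 by omega, Nat.totient_prime_pow Nat.prime_two (by omega)]
    simp; omega
  -- cyclotomic extension instance
  set M : ℕ+ := ⟨m, hm0⟩ with hM
  have hζ' : IsPrimitiveRoot ζ ((M : ℕ+) : ℕ) := hζ
  haveI : IsCyclotomicExtension {(M : ℕ)} ℚ K := by
    rw [IsCyclotomicExtension.iff_adjoin_eq_top]
    refine ⟨fun p hp _ => ?_, ?_⟩
    · rw [Set.mem_singleton_iff] at hp; subst hp; exact ⟨ζ, hζ'⟩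
    · rw [← top_le_iff, ← hK]
      apply Algebra.adjoin_mono
      rintro y hy
      rw [Set.mem_singleton_iff] at hy; subst hy
      exact ⟨(M : ℕ), rfl, M.ne_zero, hζ.pow_eq_one⟩
  have hirr : Irreducible (Polynomial.cyclotomic ((M : ℕ+) : ℕ) ℚ) :=
    Polynomial.cyclotomic.irreducible_rat hm0
  -- the sum over embeddings equals the sum over primitive roots
  set X : K := ∑ i : Fin n, (x i : K) * ζ ^ (i : ℕ) with hX
  have step1 : ∑ σ : K →+* ℂ, ‖σ X‖ ^ 2 =
      ∑ η ∈ primitiveRoots m ℂ, ‖∑ i : Fin n, (x i : ℂ) * η ^ (i : ℕ)‖ ^ 2 := by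
    conv_rhs => rw [← Finset.sum_coe_sort]
    refine Fintype.sum_equiv
      ((RingHom.equivRatAlgHom K ℂ).trans (hζ'.embeddingsEquivPrimitiveRoots ℂ hirr)) _ _ fun σ => ?_
    have he : (((RingHom.equivRatAlgHom K ℂ).trans (hζ'.embeddingsEquivPrimitiveRoots ℂ hirr)) σ : ℂ)
        = σ ζ := by
      rw [Equiv.trans_apply, IsPrimitiveRoot.embeddingsEquivPrimitiveRoots_apply_coe]
      rfl
    rw [he, hX, map_sum]
    congr 2
    refine Finset.sum_congr rfl fun i _ => ?_
    rw [map_mul, map_pow, map_intCast]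
  -- primitive roots are ξ^(2j+1)
  set ξ : ℂ := Complex.exp (2 * Real.pi * Complex.I / m) with hξdef
  have hξ : IsPrimitiveRoot ξ m := Complex.isPrimitiveRoot_exp m (by omega)
  have hinj : Function.Injective (fun j : Fin n => ξ ^ (2 * (j : ℕ) + 1)) := by
    intro a b hab
    have := hξ.pow_inj (by omega : 2 * (a:ℕ) + 1 < m) (by omega : 2 * (b:ℕ) + 1 < m) hab
    exact Fin.ext (by omega)
  have himg : primitiveRoots m ℂ =
      Finset.image (fun j : Fin n => ξ ^ (2 * (j : ℕ) + 1)) Finset.univ := by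
    refine (Finset.eq_of_subset_of_card_le ?_ ?_).symm
    · intro y hy
      rw [Finset.mem_image] at hy
      obtain ⟨j, -, rfl⟩ := hy
      rw [mem_primitiveRoots hm0]
      refine hξ.pow_of_coprime _ ?_
      rw [hm]
      exact Nat.Coprime.pow_right _
        ((Nat.prime_two.coprime_iff_not_dvd.mpr (by omega)).symm)
    · rw [hξ.card_primitiveRoots, htot, Finset.card_image_of_injective _ hinj,
        Finset.card_univ, Fintype.card_fin]
  have step2 : ∑ η ∈ primitiveRoots m ℂ, ‖∑ i : Fin n, (x i : ℂ) * η ^ (i : ℕ)‖ ^ 2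
      = ∑ j : Fin n, ‖∑ i : Fin n, (x i : ℂ) * (ξ ^ (2 * (j : ℕ) + 1)) ^ (i : ℕ)‖ ^ 2 := by
    rw [himg, Finset.sum_image (fun a _ b _ h => hinj h)]
  -- apply the key computation
  have hξ2 : IsPrimitiveRoot ξ (2 * n) := by rwa [hmn] at hξ
  have hkey := aux_key n hnpos ξ hξ2 x
  have step3 : ∑ j : Fin n, ‖∑ i : Fin n, (x i : ℂ) * (ξ ^ (2 * (j : ℕ) + 1)) ^ (i : ℕ)‖ ^ 2
      = (n : ℝ) * ∑ i : Fin n, (x i : ℝ) ^ 2 := by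
    have hc : ((∑ j : Fin n, ‖∑ i : Fin n, (x i : ℂ) * (ξ ^ (2 * (j : ℕ) + 1)) ^ (i : ℕ)‖ ^ 2 : ℝ) : ℂ)
        = (((n : ℝ) * ∑ i : Fin n, (x i : ℝ) ^ 2 : ℝ) : ℂ) := by
      push_cast
      rw [← hkey]
      refine Finset.sum_congr rfl fun j _ => ?_
      rw [Complex.mul_conj, ← Complex.sq_norm]
      norm_cast
    exact_mod_cast hc
  have hS : ∑ σ : K →+* ℂ, ‖σ X‖ ^ 2 = (n : ℝ) * ∑ i : Fin n, (x i : ℝ) ^ 2 := by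
    rw [step1, step2, step3]
  rw [hS, ← Real.exp_sum]
  congr 1
  have hn0 : (n:ℝ) ≠ 0 := by positivity
  have hr0 : r ^ 2 ≠ 0 := by positivity
  rw [← Finset.sum_div]
  field_simp
  rw [Finset.sum_neg_distrib]
end

section
/- Let ω_1, ..., ω_m be real numbers, L = Π_{j=1}^m (1 − exp(2πi ω_j)) and S = Σ_{j=1}^m exp(2πi ω_j). Then |L| ≤ 2^{m/2} (1 + |S|/m)^{m/2}. -/
open scoped BigOperators

/-- Shparlinski's inequality: for real numbers `ω_1, …, ω_m`, with
`L = ∏_j (1 − e^{2πiω_j})` and `S = ∑_j e^{2πiω_j}`, one has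
`|L| ≤ 2^{m/2}(1 + |S|/m)^{m/2}`. -/
theorem stmt_13 (m : ℕ) (hm : 0 < m) (ω : Fin m → ℝ) :
    ‖(∏ j : Fin m, (1 - Complex.exp (2 * Real.pi * Complex.I * (ω j))))‖ ≤
      (2 * (1 + ‖(∑ j : Fin m,
        Complex.exp (2 * Real.pi * Complex.I * (ω j)))‖ / m)) ^ ((m : ℝ) / 2) := by
  set e : Fin m → ℂ := fun j => Complex.exp (2 * Real.pi * Complex.I * (ω j)) with he
  set S := ∑ j : Fin m, e j with hS
  set a : Fin m → ℝ := fun j => 2 - 2 * Real.cos (2 * Real.pi * ω j) with ha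
  have hmr : (0:ℝ) < m := Nat.cast_pos.mpr hm
  have hexp : ∀ j, e j = Complex.exp (((2 * Real.pi * ω j : ℝ) : ℂ) * Complex.I) := by
    intro j; rw [he]; push_cast; ring_nf
  have hanneg : ∀ j, 0 ≤ a j := fun j => by
    have := Real.cos_le_one (2 * Real.pi * ω j); simp [ha]; linarith
  have key1 : ∀ j, (‖1 - e j‖) ^ 2 = a j := by
    intro j
    rw [hexp j, Complex.sq_norm, Complex.normSq_apply, Complex.sub_re, Complex.sub_im,
      Complex.one_re, Complex.one_im, Complex.exp_ofReal_mul_I_re, Complex.exp_ofReal_mul_I_im]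
    have := Real.sin_sq_add_cos_sq (2 * Real.pi * ω j)
    simp only [ha]
    nlinarith [Real.sin_sq_add_cos_sq (2 * Real.pi * ω j)]
  -- sum of cos = Re S
  have hre : S.re = ∑ j : Fin m, Real.cos (2 * Real.pi * ω j) := by
    rw [hS, Complex.re_sum]
    refine Finset.sum_congr rfl fun j _ => ?_
    rw [hexp j, Complex.exp_ofReal_mul_I_re]
  have hcos : -(‖S‖) ≤ ∑ j : Fin m, Real.cos (2 * Real.pi * ω j) := by
    rw [← hre]
    have := Complex.abs_re_le_norm S
    have := abs_le.mp this
    linarith [this.1]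
  set c : ℝ := 2 * (1 + ‖S‖ / m) with hc
  have hcnn : 0 ≤ c := by positivity
  have hsum : ∑ j : Fin m, a j ≤ m * c := by
    have : ∑ j : Fin m, a j = 2 * m - 2 * ∑ j : Fin m, Real.cos (2 * Real.pi * ω j) := by
      simp [ha, Finset.sum_sub_distrib, Finset.mul_sum]; ring
    rw [this, hc]
    have h2 : 0 ≤ ‖S‖ := norm_nonneg S
    field_simp
    nlinarith
  -- AM-GM
  have hamgm : ∏ j : Fin m, a j ≤ c ^ m := by
    have h1 := Real.geom_mean_le_arith_mean_weighted Finset.univ (fun _ => (m:ℝ)⁻¹) a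
      (fun i _ => by positivity)
      (by simp [Finset.sum_const]; field_simp) (fun i _ => hanneg i)
    -- h1 : ∏ a i ^ (1/m) ≤ ∑ (1/m) * a i
    have h2 : (∏ j : Fin m, a j) ^ ((m:ℝ)⁻¹) ≤ c := by
      rw [← Real.finset_prod_rpow _ _ (fun i _ => hanneg i)]
      calc ∏ j : Fin m, a j ^ ((m:ℝ)⁻¹) ≤ ∑ j : Fin m, (m:ℝ)⁻¹ * a j := h1
        _ = (∑ j : Fin m, a j) / m := by rw [← Finset.mul_sum]; ring
        _ ≤ c := by rw [div_le_iff₀ hmr]; linarith [hsum]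
    have h3 : ((∏ j : Fin m, a j) ^ ((m:ℝ)⁻¹)) ^ (m:ℝ) ≤ c ^ (m:ℝ) :=
      Real.rpow_le_rpow (Real.rpow_nonneg (Finset.prod_nonneg fun i _ => hanneg i) _) h2
        (le_of_lt hmr)
    rwa [← Real.rpow_mul (Finset.prod_nonneg fun i _ => hanneg i),
      inv_mul_cancel₀ (ne_of_gt hmr), Real.rpow_one, Real.rpow_natCast] at h3
  -- conclude
  have hL2 : (‖∏ j : Fin m, (1 - e j)‖) ^ 2 = ∏ j : Fin m, a j := by
    rw [norm_prod, ← Finset.prod_pow]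
    exact Finset.prod_congr rfl fun j _ => key1 j
  have habs : 0 ≤ ‖∏ j : Fin m, (1 - e j)‖ := norm_nonneg _
  have : ‖∏ j : Fin m, (1 - e j)‖ ≤ Real.sqrt (c ^ m) := by
    rw [Real.le_sqrt habs, hL2]
    · exact hamgm
    · positivity
  calc ‖∏ j : Fin m, (1 - e j)‖ ≤ Real.sqrt (c ^ m) := this
    _ = c ^ ((m:ℝ)/2) := by
        rw [Real.sqrt_eq_rpow, ← Real.rpow_natCast c m, ← Real.rpow_mul hcnn]
        ring_nf
end

section
/- Let q be an odd prime, m an even integer with m | q − 1, and α an element of order m in F_q^×. Then |Σ_{j=0}^{m−1} exp(2πi α^j y / q)| ≤ √q for every nonzero y ∈ F_q, where α^j y is interpreted via integer lifts. -/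
open scoped BigOperators

namespace Stmt16Aux

lemma conj_stdAddChar {q : ℕ} [NeZero q] (x : ZMod q) :
    (starRingEnd ℂ) (ZMod.stdAddChar x) = ZMod.stdAddChar (-x) := by
  have h1 : x = ((x.val : ℤ) : ZMod q) := by simp [ZMod.natCast_zmod_val]
  rw [h1, ← Int.cast_neg, ZMod.stdAddChar_coe, ZMod.stdAddChar_coe, ← Complex.exp_conj]
  congr 1
  simp only [map_div₀, map_mul, Complex.conj_I, Complex.conj_ofReal, map_ofNat,
    map_intCast, map_natCast, Int.cast_neg]
  ring

end Stmt16Aux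

/-- Gauss-sum bound for subgroup exponential sums: for `q` an odd prime, `m` even with
`m ∣ q − 1`, and `α` of order `m` in `𝔽_q^×`,
`|∑_{j=0}^{m−1} e^{2πi α^j y / q}| ≤ √q` for every nonzero `y ∈ 𝔽_q`
(with `α^j y` interpreted via integer lifts). -/
theorem stmt_16 (q m : ℕ) (hq : q.Prime) (hodd : Odd q) [NeZero q] (hme : Even m)
    (hdvd : m ∣ q - 1) (α : ZMod q) (hα : orderOf α = m) (y : ZMod q) (hy : y ≠ 0) :
    ‖(∑ j ∈ Finset.range m,
        Complex.exp (2 * Real.pi * Complex.I * (((α ^ j * y).val : ℝ)) / q))‖ ≤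
      Real.sqrt q := by
  classical
  haveI : Fact q.Prime := ⟨hq⟩
  set ψ : AddChar (ZMod q) ℂ := ZMod.stdAddChar with hψdef
  set f : ZMod q → ℂ := fun z => ∑ j ∈ Finset.range m, ψ (α ^ j * z) with hf
  -- basic facts
  have hq3 : 3 ≤ q := by
    rcases hodd with ⟨k, hk⟩
    have := hq.two_le
    omega
  have hm0 : 0 < m := by
    rcases Nat.eq_zero_or_pos m with h | h
    · exfalso
      subst h
      have : q - 1 = 0 := Nat.eq_zero_of_zero_dvd hdvd
      omega
    · exact h
  have hαm : α ^ m = 1 := by rw [← hα]; exact pow_orderOf_eq_one α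
  have hα0 : α ≠ 0 := by
    intro h
    have h1 : (0 : ZMod q) ^ m = 1 := by rw [← h]; exact hαm
    rw [zero_pow hm0.ne'] at h1
    exact zero_ne_one h1
  have key : ∀ j k : ℕ, j ≤ k → k < m → α ^ j = α ^ k → j = k := by
    intro j k hle hk h
    have h2 : α ^ j * α ^ (k - j) = α ^ j * 1 := by
      rw [mul_one, ← pow_add, Nat.add_sub_cancel' hle, ← h]
    have h3 := mul_left_cancel₀ (pow_ne_zero j hα0) h2
    have h4 := orderOf_dvd_of_pow_eq_one h3
    rw [hα] at h4
    have h5 := Nat.eq_zero_of_dvd_of_lt h4 (lt_of_le_of_lt (Nat.sub_le k j) hk)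
    omega
  have hinj : ∀ j ∈ Finset.range m, ∀ k ∈ Finset.range m, α ^ j = α ^ k → j = k := by
    intro j hj k hk h
    rw [Finset.mem_range] at hj hk
    rcases le_total j k with hle | hle
    · exact key j k hle hk h
    · exact (key k j hle hj h.symm).symm
  -- the goal sum equals f y
  have hgoal : (∑ j ∈ Finset.range m,
      Complex.exp (2 * Real.pi * Complex.I * (((α ^ j * y).val : ℝ)) / q)) = f y := by
    rw [hf]
    refine Finset.sum_congr rfl fun j _ => ?_
    rw [hψdef, ZMod.stdAddChar_apply, ZMod.toCircle_apply]
    norm_cast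
  rw [hgoal]
  -- f is invariant under multiplication by α
  have hshift : ∀ z : ZMod q, f (α * z) = f z := by
    intro z
    have h1 : f (α * z) = ∑ j ∈ Finset.range m, ψ (α ^ (j + 1) * z) := by
      rw [hf]
      refine Finset.sum_congr rfl fun j _ => ?_
      congr 1
      rw [pow_succ]
      ring
    have h2 : (∑ j ∈ Finset.range m, ψ (α ^ (j + 1) * z)) + ψ (α ^ 0 * z)
        = (∑ j ∈ Finset.range m, ψ (α ^ j * z)) + ψ (α ^ m * z) := by
      rw [← Finset.sum_range_succ' (fun j => ψ (α ^ j * z)) m,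
        Finset.sum_range_succ (fun j => ψ (α ^ j * z)) m]
    have h3 : ψ (α ^ m * z) = ψ (α ^ 0 * z) := by rw [hαm, pow_zero]
    rw [h3] at h2
    have h4 := add_right_cancel h2
    rw [h1, h4, hf]
  have hshiftpow : ∀ (k : ℕ) (z : ZMod q), f (α ^ k * z) = f z := by
    intro k
    induction k with
    | zero => intro z; rw [pow_zero, one_mul]
    | succ n ih =>
      intro z
      have : α ^ (n + 1) * z = α ^ n * (α * z) := by rw [pow_succ]; ring
      rw [this, ih, hshift]
  -- orthogonality
  have horth : ∀ b : ZMod q, (∑ z : ZMod q, ψ (z * b)) = if b = 0 then (q : ℂ) else 0 := by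
    intro b
    rw [hψdef, AddChar.sum_mulShift b (ZMod.isPrimitive_stdAddChar q), ZMod.card]
    split_ifs <;> simp
  -- |f z|^2 as complex product
  have habs2 : ∀ z : ZMod q, f z * (starRingEnd ℂ) (f z) = ((‖f z‖) ^ 2 : ℝ) := by
    intro z
    rw [Complex.mul_conj]
    exact congrArg _ (Complex.sq_norm (f z)).symm
  -- total L² mass
  have hC : (∑ z : ZMod q, f z * (starRingEnd ℂ) (f z)) = (q : ℂ) * m := by
    have expand : ∀ z : ZMod q, f z * (starRingEnd ℂ) (f z)
        = ∑ j ∈ Finset.range m, ∑ k ∈ Finset.range m, ψ (z * (α ^ j - α ^ k)) := by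
      intro z
      rw [hf, map_sum, Finset.sum_mul_sum]
      refine Finset.sum_congr rfl fun j _ => Finset.sum_congr rfl fun k _ => ?_
      rw [Stmt16Aux.conj_stdAddChar (α ^ k * z), ← AddChar.map_add_eq_mul]
      congr 1
      ring
    calc (∑ z : ZMod q, f z * (starRingEnd ℂ) (f z))
        = ∑ z : ZMod q, ∑ j ∈ Finset.range m, ∑ k ∈ Finset.range m,
            ψ (z * (α ^ j - α ^ k)) := Finset.sum_congr rfl fun z _ => expand z
      _ = ∑ j ∈ Finset.range m, ∑ k ∈ Finset.range m, ∑ z : ZMod q,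
            ψ (z * (α ^ j - α ^ k)) := by
          rw [Finset.sum_comm]
          exact Finset.sum_congr rfl fun j _ => Finset.sum_comm
      _ = ∑ j ∈ Finset.range m, ∑ k ∈ Finset.range m,
            (if j = k then (q : ℂ) else 0) := by
          refine Finset.sum_congr rfl fun j hj => Finset.sum_congr rfl fun k hk => ?_
          rw [horth]
          by_cases h : j = k
          · subst h; simp
          · have : α ^ j - α ^ k ≠ 0 := by
              rw [sub_ne_zero]
              exact fun hc => h (hinj j hj k hk hc)
            rw [if_neg this, if_neg h]
      _ = ∑ j ∈ Finset.range m, (q : ℂ) := by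
          refine Finset.sum_congr rfl fun j hj => ?_
          rw [Finset.sum_ite_eq (Finset.range m) j (fun _ => (q : ℂ)), if_pos hj]
      _ = (q : ℂ) * m := by rw [Finset.sum_const, Finset.card_range, nsmul_eq_mul]; ring
  have hR : (∑ z : ZMod q, (‖f z‖) ^ 2) = (q : ℝ) * m := by
    have h1 : (∑ z : ZMod q, (((‖f z‖) ^ 2 : ℝ) : ℂ)) = (q : ℂ) * m := by
      rw [← hC]
      exact Finset.sum_congr rfl fun z _ => (habs2 z).symm
    rw [← Complex.ofReal_sum] at h1
    exact_mod_cast h1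
  -- value at 0
  have hf0 : ‖f 0‖ = m := by
    have : f 0 = (m : ℂ) := by
      rw [hf]
      simp [AddChar.map_zero_eq_one]
    rw [this]
    simp
  -- coset sum
  set T : Finset (ZMod q) := (Finset.range m).image (fun j => α ^ j * y) with hT
  have hTsum : (∑ z ∈ T, (‖f z‖) ^ 2) = m * (‖f y‖) ^ 2 := by
    rw [hT, Finset.sum_image (fun j hj k hk h => hinj j hj k hk (mul_right_cancel₀ hy h))]
    have h1 : ∀ j ∈ Finset.range m, (‖f (α ^ j * y)‖) ^ 2
        = (‖f y‖) ^ 2 := fun j _ => by rw [hshiftpow]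
    rw [Finset.sum_congr rfl h1, Finset.sum_const, Finset.card_range, nsmul_eq_mul]
  have h0T : (0 : ZMod q) ∉ T := by
    rw [hT]
    simp only [Finset.mem_image, Finset.mem_range, not_exists]
    intro j
    intro ⟨_, hj2⟩
    exact mul_ne_zero (pow_ne_zero j hα0) hy hj2
  -- comparison
  have hsub : (∑ z ∈ insert (0 : ZMod q) T, (‖f z‖) ^ 2)
      ≤ ∑ z : ZMod q, (‖f z‖) ^ 2 := by
    refine Finset.sum_le_sum_of_subset_of_nonneg (Finset.subset_univ _) ?_
    intro z _ _
    positivity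
  rw [Finset.sum_insert h0T, hTsum, hf0, hR] at hsub
  -- conclude
  have hmR : (0 : ℝ) < m := by exact_mod_cast hm0
  have hA2 : (‖f y‖) ^ 2 ≤ (q : ℝ) := by nlinarith
  have := Real.sqrt_le_sqrt hA2
  rwa [Real.sqrt_sq (norm_nonneg _)] at this
end

section
/- Let q be prime, m a power of 2, q ≡ 1 (mod m), q < m², n = m/2, α of order m in F_q^×, and y ∈ F_q nonzero. Set β = (1 + √q/m)/2. Then 0 < β < 1 and |Π_{i=0}^{n−1} cos(α^i π y / q)| ≤ β^{n/2}. -/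
open scoped BigOperators

open Finset in
private lemma psi_conj17 {q : ℕ} [NeZero q] (w : ZMod q) :
    (starRingEnd ℂ) (ZMod.stdAddChar w) = ZMod.stdAddChar (-w) := by
  have h1 : ZMod.stdAddChar w * ZMod.stdAddChar (-w) = 1 := by
    rw [← AddChar.map_add_eq_mul]; simp
  have h2 : ‖ZMod.stdAddChar (w : ZMod q)‖ = 1 := by
    rw [ZMod.stdAddChar_apply]
    simpa using Circle.norm_coe (ZMod.toCircle w)
  rw [← Complex.inv_eq_conj h2]
  exact (inv_eq_of_mul_eq_one_right h1)

private lemma psi_re17 {q : ℕ} [NeZero q] (w : ZMod q) :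
    (ZMod.stdAddChar w).re = Real.cos (2 * Real.pi * w.val / q) := by
  have h0 : ((w.val : ℤ) : ZMod q) = w := by
    push_cast
    exact ZMod.natCast_zmod_val w
  have h1 : ZMod.stdAddChar w = Complex.exp (2 * Real.pi * Complex.I * w.val / q) := by
    rw [← h0, ZMod.stdAddChar_coe]
    norm_num
  have h2 : (2 * (Real.pi:ℂ) * Complex.I * w.val / q)
      = ((2 * Real.pi * w.val / q : ℝ) : ℂ) * Complex.I := by
    push_cast; ring
  rw [h1, h2, Complex.exp_ofReal_mul_I_re]

open Finset in
private lemma psi_sum17 {q : ℕ} [NeZero q] (c : ZMod q) :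
    ∑ z : ZMod q, ZMod.stdAddChar (c * z) = if c = 0 then (q : ℂ) else 0 := by
  classical
  have := AddChar.sum_mulShift c (ZMod.isPrimitive_stdAddChar q)
  simp_rw [mul_comm] at this
  rw [this]
  split_ifs <;> simp [ZMod.card]

set_option maxHeartbeats 2000000 in
open Finset in
/-- For `q` prime, `m` a power of 2, `q ≡ 1 (mod m)`, `q < m²`, `n = m/2`, `α` of order `m`
in `𝔽_q^×`, `y ≠ 0`, and `β = (1 + √q/m)/2`: one has `0 < β < 1` and
`|∏_{i<n} cos(α^i π y / q)| ≤ β^{n/2}` (powers of `α` via integer lifts). -/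
theorem stmt_17 (q m n : ℕ) (hq : q.Prime) [NeZero q] (hm : ∃ d : ℕ, m = 2 ^ d)
    (hqm : q % m = 1) (hq2 : q < m ^ 2) (hn : n = m / 2) (α : ZMod q) (hα : orderOf α = m)
    (y : ZMod q) (hy : y ≠ 0) (β : ℝ) (hβ : β = (1 + Real.sqrt q / m) / 2) :
    (0 < β ∧ β < 1) ∧
      |∏ i ∈ Finset.range n, Real.cos (((α ^ i).val : ℝ) * Real.pi * (y.val : ℝ) / q)| ≤
        β ^ ((n : ℝ) / 2) := by
  classical
  haveI := Fact.mk hq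
  have hq1 : 1 < q := hq.one_lt
  have hm0 : m ≠ 0 := by rintro rfl; rw [Nat.mod_zero] at hqm; omega
  have hm1 : m ≠ 1 := by rintro rfl; rw [Nat.mod_one] at hqm; omega
  have hm2 : 2 ≤ m := by omega
  obtain ⟨d, hd⟩ := hm
  have hd0 : d ≠ 0 := by rintro rfl; simp at hd; omega
  have hdvd : 2 ∣ m := hd ▸ dvd_pow_self 2 hd0
  have hmn : m = 2 * n := by subst hn; omega
  have hn0 : n ≠ 0 := by omega
  -- β bounds
  have hq0R : (0:ℝ) < q := by exact_mod_cast Nat.pos_of_ne_zero (by omega)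
  have hm0R : (0:ℝ) < m := by exact_mod_cast Nat.pos_of_ne_zero hm0
  have hsq : Real.sqrt q < m := by
    rw [Real.sqrt_lt' hm0R]
    exact_mod_cast hq2
  have hsq0 : (0:ℝ) ≤ Real.sqrt q := Real.sqrt_nonneg _
  have hβpos : 0 < β := by rw [hβ]; positivity
  have hβ1 : β < 1 := by
    rw [hβ]
    have : Real.sqrt q / m < 1 := (div_lt_one hm0R).2 hsq
    linarith
  refine ⟨⟨hβpos, hβ1⟩, ?_⟩
  -- α facts
  have hα0 : α ≠ 0 := by
    rintro rfl
    have h1 : (0 : ZMod q) ^ m = 1 := by rw [← hα]; exact pow_orderOf_eq_one 0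
    rw [zero_pow hm0] at h1
    exact zero_ne_one h1
  have hαm : α ^ m = 1 := by rw [← hα]; exact pow_orderOf_eq_one α
  have hαn : α ^ n = -1 := by
    have h2 : (α ^ n) ^ 2 = 1 := by
      rw [← pow_mul, mul_comm, ← hmn, hαm]
    rcases sq_eq_one_iff.mp h2 with h | h
    · exfalso
      have := orderOf_le_of_pow_eq_one (Nat.pos_of_ne_zero hn0) h
      omega
    · exact h
  have hpowinj : ∀ i ∈ Finset.range m, ∀ j ∈ Finset.range m, α ^ i = α ^ j → i = j := by
    intro i hi j hj hij
    have := pow_injOn_Iio_orderOf (x := α)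
    exact this (by rw [hα]; exact Finset.mem_range.mp hi)
      (by rw [hα]; exact Finset.mem_range.mp hj) hij
  -- the character sum
  set Ψ : AddChar (ZMod q) ℂ := ZMod.stdAddChar with hΨ
  set S : ZMod q → ℂ := fun z => ∑ i ∈ Finset.range m, Ψ (α ^ i * z) with hSdef
  have hSshift : ∀ z, S (α * z) = S z := by
    intro z
    show (∑ i ∈ range m, Ψ (α ^ i * (α * z))) = ∑ i ∈ range m, Ψ (α ^ i * z)
    have e1 : (∑ i ∈ range m, Ψ (α ^ i * (α * z))) = ∑ i ∈ range m, Ψ (α ^ (i + 1) * z) :=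
      Finset.sum_congr rfl fun i _ => by rw [show α ^ i * (α * z) = α ^ (i+1) * z by ring]
    have h1 := Finset.sum_range_succ' (fun i => Ψ (α ^ i * z)) m
    have h2 := Finset.sum_range_succ (fun i => Ψ (α ^ i * z)) m
    have h3 : Ψ (α ^ m * z) = Ψ (α ^ 0 * z) := by rw [hαm, pow_zero]
    rw [e1]
    linear_combination h2 - h1 + h3
  have hSorbit : ∀ i : ℕ, S (α ^ i * y) = S y := by
    intro i
    induction i with
    | zero => rw [pow_zero, one_mul]
    | succ k ih => rw [pow_succ, show α ^ k * α * y = α * (α ^ k * y) by ring, hSshift, ih]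
  have hS0 : S 0 = (m : ℂ) := by
    rw [hSdef]
    simp [AddChar.map_zero_eq_one]
  have hconj : ∀ w, (starRingEnd ℂ) (Ψ w) = Ψ (-w) := fun w => psi_conj17 w
  -- total second moment
  have hTot : ∑ z : ZMod q, (Complex.normSq (S z) : ℂ) = (m : ℂ) * q := by
    have expand : ∀ z : ZMod q, (Complex.normSq (S z) : ℂ)
        = ∑ i ∈ range m, ∑ j ∈ range m, Ψ ((α ^ i - α ^ j) * z) := by
      intro z
      rw [← Complex.mul_conj, hSdef]
      simp only
      rw [map_sum (starRingEnd ℂ), sum_mul_sum]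
      refine Finset.sum_congr rfl fun i _ => Finset.sum_congr rfl fun j _ => ?_
      rw [hconj, ← AddChar.map_add_eq_mul]
      congr 1; ring
    calc ∑ z : ZMod q, (Complex.normSq (S z) : ℂ)
        = ∑ z : ZMod q, ∑ i ∈ range m, ∑ j ∈ range m, Ψ ((α ^ i - α ^ j) * z) := by
          exact Finset.sum_congr rfl fun z _ => expand z
      _ = ∑ i ∈ range m, ∑ j ∈ range m, ∑ z : ZMod q, Ψ ((α ^ i - α ^ j) * z) := by
          rw [Finset.sum_comm]
          exact Finset.sum_congr rfl fun i _ => Finset.sum_comm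
      _ = ∑ i ∈ range m, ∑ j ∈ range m, if i = j then (q : ℂ) else 0 := by
          refine Finset.sum_congr rfl fun i hi => Finset.sum_congr rfl fun j hj => ?_
          rw [psi_sum17]
          congr 1
          simp only [sub_eq_zero, eq_iff_iff]
          constructor
          · exact fun h => hpowinj i hi j hj h
          · rintro rfl; rfl
      _ = ∑ i ∈ range m, (q : ℂ) := by
          refine Finset.sum_congr rfl fun i hi => ?_
          rw [Finset.sum_ite_eq]
          simp [hi]
      _ = (m : ℂ) * q := by rw [Finset.sum_const, Finset.card_range]; simp [mul_comm]
  have hTotR : ∑ z : ZMod q, Complex.normSq (S z) = (m : ℝ) * q := by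
    have := hTot
    rw [show ((m:ℂ) * q) = (((m : ℝ) * q : ℝ) : ℂ) by push_cast; ring, ← Complex.ofReal_sum] at this
    exact_mod_cast this
  -- orbit bound
  set O : Finset (ZMod q) := (Finset.range m).image (fun i => α ^ i * y) with hO
  have hO0 : (0 : ZMod q) ∉ O := by
    intro hmem
    rw [hO, Finset.mem_image] at hmem
    obtain ⟨i, -, hi⟩ := hmem
    exact (mul_ne_zero (pow_ne_zero i hα0) hy) hi
  have hOsum : ∑ z ∈ O, Complex.normSq (S z) = (m : ℝ) * Complex.normSq (S y) := by
    rw [hO, Finset.sum_image]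
    · rw [Finset.sum_congr rfl fun i _ => by rw [hSorbit i]]
      rw [Finset.sum_const, Finset.card_range]; simp [mul_comm]
    · intro i hi j hj hij
      exact hpowinj i hi j hj (mul_right_cancel₀ hy hij)
  have hkey : Complex.normSq (S 0) + ∑ z ∈ O, Complex.normSq (S z)
      ≤ ∑ z : ZMod q, Complex.normSq (S z) := by
    have h1 : ∑ z ∈ insert (0 : ZMod q) O, Complex.normSq (S z)
        ≤ ∑ z : ZMod q, Complex.normSq (S z) :=
      Finset.sum_le_sum_of_subset_of_nonneg (Finset.subset_univ _)
        (fun _ _ _ => Complex.normSq_nonneg _)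
    rwa [Finset.sum_insert hO0] at h1
  have hNS0 : Complex.normSq (S 0) = (m:ℝ) * m := by rw [hS0, Complex.normSq_natCast]
  have hXq : Complex.normSq (S y) ≤ q := by
    rw [hNS0, hOsum, hTotR] at hkey
    nlinarith [Complex.normSq_nonneg (S y), hm0R]
  have habsS : ‖S y‖ ≤ Real.sqrt q := by
    rw [Complex.norm_def]
    exact Real.sqrt_le_sqrt hXq
  have hReS : (S y).re ≤ Real.sqrt q := le_trans (Complex.re_le_norm _) habsS
  -- cosine side
  set t : ℕ → ℝ := fun i => Real.cos (((α ^ i).val : ℝ) * Real.pi * (y.val : ℝ) / q) ^ 2 with ht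
  have ht_nonneg : ∀ i, 0 ≤ t i := fun i => sq_nonneg _
  have ht_eq : ∀ i : ℕ, t i = (1 + (Ψ (α ^ i * y)).re) / 2 := by
    intro i
    have hq' : (q : ℝ) ≠ 0 := ne_of_gt hq0R
    have hre : (Ψ (α ^ i * y)).re = Real.cos (2 * Real.pi * ((α ^ i * y).val : ℝ) / q) := by
      rw [hΨ, psi_re17]
    rw [ht]
    simp only
    rw [Real.cos_sq, hre]
    obtain ⟨a, ha⟩ : ∃ a : ℕ, (α ^ i).val = a := ⟨_, rfl⟩
    obtain ⟨b, hb⟩ : ∃ b : ℕ, y.val = b := ⟨_, rfl⟩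
    obtain ⟨v, hv⟩ : ∃ v : ℕ, (α ^ i * y).val = v := ⟨_, rfl⟩
    have hval : a * b = v + q * (a * b / q) := by
      rw [← ha, ← hb, ← hv, ZMod.val_mul]
      exact (Nat.mod_add_div _ _).symm
    rw [ha, hb, hv]
    have h1 : (a : ℝ) * b = (v : ℝ) + (q : ℝ) * ((a * b / q : ℕ) : ℝ) := by
      exact_mod_cast congrArg (Nat.cast : ℕ → ℝ) hval
    have harg : 2 * ((a : ℝ) * Real.pi * (b : ℝ) / q)
        = 2 * Real.pi * (v : ℝ) / q + (((a * b / q : ℕ) : ℤ) : ℝ) * (2 * Real.pi) := by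
      rw [Int.cast_natCast]
      field_simp
      linear_combination h1
    have := Real.cos_add_int_mul_two_pi (2 * Real.pi * (v : ℝ) / q) ((a * b / q : ℕ) : ℤ)
    rw [← harg] at this
    rw [← this]
    ring
  have hsum_t : ∑ i ∈ range m, t i = ((m : ℝ) + (S y).re) / 2 := by
    rw [Finset.sum_congr rfl fun i _ => ht_eq i]
    rw [hSdef]
    simp only
    rw [Complex.re_sum]
    rw [← Finset.sum_div, Finset.sum_add_distrib, Finset.sum_const, Finset.card_range]
    simp
  -- AM-GM
  set A : ℝ := (∑ i ∈ range m, t i) / m with hA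
  have hA_nonneg : 0 ≤ A := by
    rw [hA]
    exact div_nonneg (Finset.sum_nonneg fun i _ => ht_nonneg i) hm0R.le
  have hAβ : A ≤ β := by
    rw [hA, hsum_t, hβ, div_div]
    have hβ2 : (1 + Real.sqrt q / m) / 2 = ((m : ℝ) + Real.sqrt q) / (2 * m) := by
      rw [div_eq_div_iff (by norm_num : (2:ℝ) ≠ 0) (by positivity : (2 * (m:ℝ)) ≠ 0)]
      field_simp
    rw [hβ2]
    exact (div_le_div_iff_of_pos_right (by positivity)).2 (by linarith)
  have hAMGM : ∏ i ∈ range m, t i ≤ A ^ m := by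
    have hw : ∀ i ∈ range m, (0:ℝ) ≤ 1 / m := fun i _ => by positivity
    have hw' : ∑ _i ∈ range m, (1 / m : ℝ) = 1 := by
      rw [Finset.sum_const, Finset.card_range]
      rw [nsmul_eq_mul]; field_simp
    have h := Real.geom_mean_le_arith_mean_weighted (range m) (fun _ => 1 / m) t hw hw'
      (fun i _ => ht_nonneg i)
    have hAeq : ∑ i ∈ range m, (1 / m : ℝ) * t i = A := by
      rw [hA, ← Finset.mul_sum]; ring
    rw [hAeq] at h
    have hexp : ∀ i ∈ range m, t i = (t i ^ (1 / m : ℝ)) ^ m := by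
      intro i _
      rw [← Real.rpow_natCast (t i ^ (1 / m : ℝ)) m, ← Real.rpow_mul (ht_nonneg i)]
      rw [show (1 / m : ℝ) * m = 1 by field_simp, Real.rpow_one]
    calc ∏ i ∈ range m, t i = ∏ i ∈ range m, (t i ^ (1 / m : ℝ)) ^ m :=
          Finset.prod_congr rfl hexp
      _ = (∏ i ∈ range m, t i ^ (1 / m : ℝ)) ^ m := by rw [Finset.prod_pow]
      _ ≤ A ^ m := pow_le_pow_left₀ (Finset.prod_nonneg fun i _ =>
            Real.rpow_nonneg (ht_nonneg i) _) h m
  have hprodβ : ∏ i ∈ range m, t i ≤ β ^ m :=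
    le_trans hAMGM (pow_le_pow_left₀ hA_nonneg hAβ m)
  -- folding: t (n + i) = t i
  have hper : ∀ i : ℕ, t (n + i) = t i := by
    intro i
    have hneg : α ^ (n + i) = -(α ^ i) := by rw [pow_add, hαn]; ring
    have hvals : ((α ^ (n + i)).val : ℝ) = (q : ℝ) - ((α ^ i).val : ℝ) := by
      rw [hneg, ZMod.neg_val]
      simp only [pow_ne_zero i hα0, if_false]
      have := (ZMod.val_lt (α ^ i)).le
      push_cast [Nat.cast_sub this]
      ring
    rw [ht]
    simp only
    rw [hvals]
    have harg : ((q : ℝ) - ((α ^ i).val : ℝ)) * Real.pi * (y.val : ℝ) / q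
        = (y.val : ℝ) * Real.pi - ((α ^ i).val : ℝ) * Real.pi * (y.val : ℝ) / q := by
      field_simp
    rw [harg, Real.cos_sub, Real.sin_nat_mul_pi, zero_mul, add_zero, mul_pow]
    have hcos1 : Real.cos ((y.val : ℝ) * Real.pi) ^ 2 = 1 := by
      have h5 := Real.sin_sq_add_cos_sq ((y.val : ℝ) * Real.pi)
      rw [Real.sin_nat_mul_pi y.val] at h5
      simpa using h5
    rw [hcos1, one_mul]
  have hsplit : ∏ i ∈ range m, t i = (∏ i ∈ range n, t i) ^ 2 := by
    rw [hmn, two_mul, Finset.prod_range_add, Finset.prod_congr rfl fun i _ => hper i, sq]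
  -- conclude
  set P : ℝ := ∏ i ∈ Finset.range n, Real.cos (((α ^ i).val : ℝ) * Real.pi * (y.val : ℝ) / q)
    with hP
  have hP2 : P ^ 2 = ∏ i ∈ range n, t i := by
    rw [hP, ht, ← Finset.prod_pow]
  have h4 : |P| ^ 4 ≤ β ^ (2 * n) := by
    have : |P| ^ 4 = (P ^ 2) ^ 2 := by
      calc |P| ^ 4 = (|P| ^ 2) ^ 2 := by ring
        _ = (P ^ 2) ^ 2 := by rw [sq_abs]
    rw [this, hP2, ← hsplit, ← hmn]
    exact hprodβ
  have hRHS : (β ^ ((n : ℝ) / 2)) ^ (4 : ℕ) = β ^ (2 * n) := by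
    rw [← Real.rpow_natCast (β ^ ((n : ℝ) / 2)) 4, ← Real.rpow_mul hβpos.le]
    rw [show ((n : ℝ) / 2 * (4 : ℕ)) = ((2 * n : ℕ) : ℝ) by push_cast; ring]
    exact Real.rpow_natCast β (2 * n)
  refine (pow_le_pow_iff_left₀ (n := 4) (abs_nonneg P) (Real.rpow_nonneg hβpos.le _)
    (by norm_num)).mp ?_
  rw [hRHS]
  exact h4
end
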